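/- arXiv:1503.02919 — 8 statements merged into one kernel-verified Lean document; each statement's English description precedes it below -/
import Mathlib

section
/- Let Σ be a smooth fan with convex support. For a cone σ_I ∈ Σ set C_I = { d ∈ L⊗ℝ : d·u_i ≥ 0 for all i ∉ I }, where d·u_i denotes the i-th coordinate of d ∈ L ⊆ ℤ^m (extended to ℝ). Then for any k, l ∈ N ∩ |Σ| with k+l ∈ |Σ|, the element d(k,l) = Ψ(k)+Ψ(l)−Ψ(k+l) lies in L ∩ Σ_{σ_I ∈ Σ} C_I (i.e. it is an effective class). -/
open Finset
open scoped Classical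

/-- Membership in the cone spanned by the rays indexed by `I`,
with nonnegative integer coefficients. -/
def InCone {D m : ℕ} (b : Fin m → Fin D → ℤ) (I : Finset (Fin m)) (k : Fin D → ℤ) : Prop :=
  ∃ c : Fin m → ℕ, (∀ i, c i ≠ 0 → i ∈ I) ∧ k = ∑ i, (c i : ℤ) • b i

/-- A smooth (simplicial, with smooth cones) fan in `ℤ^D`, recorded combinatorially:
`b` are the primitive ray generators, `cones` the index sets of cones. -/
structure SmoothFan (D m : ℕ) where
  b : Fin m → Fin D → ℤ
  cones : Finset (Finset (Fin m))
  empty_mem : ∅ ∈ cones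
  ray_mem : ∀ i : Fin m, {i} ∈ cones
  downward : ∀ I ∈ cones, ∀ J ⊆ I, J ∈ cones
  smooth : ∀ I ∈ cones,
    LinearIndependent ℚ (fun i : {x // x ∈ I} => fun j => (b i.1 j : ℚ))
  inter : ∀ I ∈ cones, ∀ J ∈ cones, ∀ k, InCone b I k → InCone b J k → InCone b (I ∩ J) k
  convex : ∀ k l, (∃ I ∈ cones, InCone b I k) → (∃ J ∈ cones, InCone b J l) →
      ∃ K ∈ cones, InCone b K (k + l)

/-- `k` is a lattice point of the support `|Σ|` of the fan. -/
def SmoothFan.InSupport {D m : ℕ} (F : SmoothFan D m) (k : Fin D → ℤ) : Prop :=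
  ∃ I ∈ F.cones, InCone F.b I k

/-- The coefficient vector `Ψ(k) ∈ (ℤ_{≥0})^m` of a lattice point of the support. -/
noncomputable def SmoothFan.Psi {D m : ℕ} (F : SmoothFan D m) (k : Fin D → ℤ) : Fin m → ℕ :=
  if h : ∃ c : Fin m → ℕ, (∃ I ∈ F.cones, ∀ i, c i ≠ 0 → i ∈ I) ∧
      k = ∑ i, (c i : ℤ) • F.b i
  then h.choose else 0

/-- `d(k,l) = Ψ(k) + Ψ(l) − Ψ(k+l)`. -/
noncomputable def SmoothFan.dEff {D m : ℕ} (F : SmoothFan D m) (k l : Fin D → ℤ) :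
    Fin m → ℤ :=
  fun i => (F.Psi k i : ℤ) + (F.Psi l i : ℤ) - (F.Psi (k + l) i : ℤ)

lemma psi_spec {D m : ℕ} (F : SmoothFan D m) (k : Fin D → ℤ) (hk : F.InSupport k) :
    (∃ I ∈ F.cones, ∀ i, F.Psi k i ≠ 0 → i ∈ I) ∧
      k = ∑ i, (F.Psi k i : ℤ) • F.b i := by
  obtain ⟨I, hI, c, hc, hk'⟩ := hk
  have h : ∃ c : Fin m → ℕ, (∃ I ∈ F.cones, ∀ i, c i ≠ 0 → i ∈ I) ∧
      k = ∑ i, (c i : ℤ) • F.b i := ⟨c, ⟨I, hI, hc⟩, hk'⟩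
  have hPsi : F.Psi k = h.choose := by rw [SmoothFan.Psi, dif_pos h]
  rw [hPsi]
  exact h.choose_spec

/-- `d(k,l) = Ψ(k)+Ψ(l)−Ψ(k+l)` is an effective class: it lies in
`L = ker(ℤ^m → N)` and in the cone `C_{I₀} = {d : d_i ≥ 0 for i ∉ I₀}` for some
cone `σ_{I₀}` of `Σ` (hence in `L ∩ Σ_{σ_I ∈ Σ} C_I`, since `C_{I₀}` is one of the
summands of that sum of cones). -/
theorem dEff_effective {D m : ℕ} (F : SmoothFan D m) (k l : Fin D → ℤ)
    (hk : F.InSupport k) (hl : F.InSupport l) (hkl : F.InSupport (k + l)) :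
    (∑ i, F.dEff k l i • F.b i = 0) ∧
    (∃ I ∈ F.cones, ∀ i ∉ I, 0 ≤ F.dEff k l i) := by
  obtain ⟨_, hk2⟩ := psi_spec F k hk
  obtain ⟨_, hl2⟩ := psi_spec F l hl
  obtain ⟨⟨I, hI, hsupp⟩, hkl2⟩ := psi_spec F (k + l) hkl
  constructor
  · have : ∑ i, F.dEff k l i • F.b i
        = (∑ i, (F.Psi k i : ℤ) • F.b i) + (∑ i, (F.Psi l i : ℤ) • F.b i)
          - ∑ i, (F.Psi (k + l) i : ℤ) • F.b i := by
      simp only [SmoothFan.dEff, sub_smul, add_smul, Finset.sum_sub_distrib,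
        Finset.sum_add_distrib]
    rw [this, ← hk2, ← hl2, ← hkl2]
    abel
  · refine ⟨I, hI, fun i hi => ?_⟩
    have h0 : F.Psi (k + l) i = 0 := by
      by_contra h
      exact hi (hsupp i h)
    simp [SmoothFan.dEff, h0]
    positivity
end

section
/- Let Σ be a smooth fan. The set {φ_k : k ∈ N ∩ |Σ|}, where φ_k = Π_{i=1}^m u_i^{Ψ_i(k)}, is a ℂ-basis of the Stanley–Reisner type ring ℂ[u_1,…,u_m]/I_SR, where I_SR is the ideal generated by the monomials Π_{i∈I} u_i for subsets I ⊆ {1,…,m} such that σ_I is not a cone of Σ. -/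
open Finset
open scoped Classical

section Aux
variable {D m : ℕ} (F : SmoothFan D m)

/-- Uniqueness of representation within a single cone. -/
lemma unique_rep_same {I : Finset (Fin m)} (hI : I ∈ F.cones) {a e : Fin m → ℕ}
    (ha : ∀ i, a i ≠ 0 → i ∈ I) (he : ∀ i, e i ≠ 0 → i ∈ I)
    (h : ∑ i, (a i : ℤ) • F.b i = ∑ i, (e i : ℤ) • F.b i) : a = e := by
  have hli := F.smooth I hI
  rw [Fintype.linearIndependent_iff] at hli
  have key : ∀ i : {x // x ∈ I}, ((a i.1 : ℚ) - (e i.1 : ℚ)) = 0 := by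
    apply hli
    funext j
    have hsum : ∀ c : Fin m → ℕ, (∀ i, c i ≠ 0 → i ∈ I) →
        (∑ i : {x // x ∈ I}, (c i.1 : ℚ) * (F.b i.1 j : ℚ))
          = ((∑ i, (c i : ℤ) • F.b i) j : ℚ) := by
      intro c hc
      rw [Finset.sum_apply]
      simp only [Pi.smul_apply, smul_eq_mul]
      push_cast
      rw [Finset.sum_coe_sort I (fun i => (c i : ℚ) * (F.b i j : ℚ))]
      apply Finset.sum_subset_zero_on_sdiff (Finset.subset_univ I)
      · intro x hx
        simp only [Finset.mem_sdiff] at hx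
        have : c x = 0 := by
          by_contra hcx
          exact hx.2 (hc x hcx)
        simp [this]
      · intro x _
        rfl
    have h1 := hsum a ha
    have h2 := hsum e he
    simp only [Finset.sum_apply, Pi.smul_apply, smul_eq_mul, sub_mul, Pi.zero_apply]
    rw [Finset.sum_sub_distrib, h1, h2, h, sub_self]
  funext i
  by_cases hi : i ∈ I
  · have := key ⟨i, hi⟩
    have : (a i : ℚ) = (e i : ℚ) := by linarith
    exact_mod_cast this
  · have h1 : a i = 0 := by by_contra hc; exact hi (ha i hc)
    have h2 : e i = 0 := by by_contra hc; exact hi (he i hc)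
    rw [h1, h2]

/-- Uniqueness of representation across two cones. -/
lemma unique_rep {I J : Finset (Fin m)} (hI : I ∈ F.cones) (hJ : J ∈ F.cones)
    {a c : Fin m → ℕ} (ha : ∀ i, a i ≠ 0 → i ∈ I) (hc : ∀ i, c i ≠ 0 → i ∈ J)
    (h : ∑ i, (a i : ℤ) • F.b i = ∑ i, (c i : ℤ) • F.b i) : a = c := by
  obtain ⟨e, he, hke⟩ := F.inter I hI J hJ (∑ i, (a i : ℤ) • F.b i)
    ⟨a, ha, rfl⟩ ⟨c, hc, h⟩
  have h1 : a = e := unique_rep_same F hI ha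
    (fun i hi => (Finset.mem_inter.mp (he i hi)).1) hke
  have h2 : c = e := unique_rep_same F hJ hc
    (fun i hi => (Finset.mem_inter.mp (he i hi)).2) (h ▸ hke)
  rw [h1, h2]

lemma psi_spec_s6 {a : Fin m → ℕ} {I : Finset (Fin m)} (hI : I ∈ F.cones)
    (ha : ∀ i, a i ≠ 0 → i ∈ I) :
    F.Psi (∑ i, (a i : ℤ) • F.b i) = a := by
  have h : ∃ c : Fin m → ℕ, (∃ I ∈ F.cones, ∀ i, c i ≠ 0 → i ∈ I) ∧
      (∑ i, (a i : ℤ) • F.b i) = ∑ i, (c i : ℤ) • F.b i := ⟨a, ⟨I, hI, ha⟩, rfl⟩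
  rw [SmoothFan.Psi, dif_pos h]
  obtain ⟨⟨J, hJ, hJs⟩, hsum⟩ := h.choose_spec
  exact (unique_rep F hI hJ ha hJs hsum).symm

lemma psi_insupport {k : Fin D → ℤ} (hk : F.InSupport k) :
    (∃ I ∈ F.cones, ∀ i, F.Psi k i ≠ 0 → i ∈ I) ∧ k = ∑ i, (F.Psi k i : ℤ) • F.b i := by
  obtain ⟨I, hI, c, hc, hsum⟩ := hk
  have h : ∃ c : Fin m → ℕ, (∃ I ∈ F.cones, ∀ i, c i ≠ 0 → i ∈ I) ∧
      k = ∑ i, (c i : ℤ) • F.b i := ⟨c, ⟨I, hI, hc⟩, hsum⟩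
  rw [SmoothFan.Psi, dif_pos h]
  exact h.choose_spec
end Aux

open MvPolynomial in
lemma ind_apply {m : ℕ} (I : Finset (Fin m)) (i : Fin m) :
    (∑ j ∈ I, Finsupp.single j (1 : ℕ)) i = if i ∈ I then 1 else 0 := by
  rw [Finsupp.finset_sum_apply]
  simp [Finsupp.single_apply, Finset.sum_ite_eq']

open MvPolynomial in
lemma mem_ISR_iff {D m : ℕ} (F : SmoothFan D m) (p : MvPolynomial (Fin m) ℂ) :
    p ∈ Ideal.span {P : MvPolynomial (Fin m) ℂ |
        ∃ I : Finset (Fin m), I ∉ F.cones ∧ P = ∏ i ∈ I, X i} ↔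
      ∀ a ∈ p.support, (a : Fin m →₀ ℕ).support ∉ F.cones := by
  have hset : {P : MvPolynomial (Fin m) ℂ | ∃ I : Finset (Fin m), I ∉ F.cones ∧ P = ∏ i ∈ I, X i}
      = (fun s => monomial s (1:ℂ)) ''
        {s : Fin m →₀ ℕ | ∃ I : Finset (Fin m), I ∉ F.cones ∧ s = ∑ i ∈ I, Finsupp.single i 1} := by
    ext P
    constructor
    · rintro ⟨I, hI, rfl⟩
      exact ⟨∑ i ∈ I, Finsupp.single i 1, ⟨I, hI, rfl⟩, by simp only []; rw [monomial_sum_one]; rfl⟩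
    · rintro ⟨s, ⟨I, hI, rfl⟩, rfl⟩
      exact ⟨I, hI, by simp only []; rw [monomial_sum_one]; rfl⟩
  rw [hset, mem_ideal_span_monomial_image]
  apply forall₂_congr
  intro a _
  constructor
  · rintro ⟨s, ⟨I, hI, rfl⟩, hle⟩ hsupp
    apply hI
    apply F.downward _ hsupp
    intro i hiI
    have h1 := hle i
    rw [ind_apply, if_pos hiI] at h1
    exact Finsupp.mem_support_iff.mpr (by omega)
  · intro hsupp
    refine ⟨∑ i ∈ a.support, Finsupp.single i 1, ⟨a.support, hsupp, rfl⟩, ?_⟩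
    intro i
    rw [ind_apply]
    by_cases hi : i ∈ a.support
    · rw [if_pos hi]
      exact Nat.one_le_iff_ne_zero.mpr (Finsupp.mem_support_iff.mp hi)
    · simp [hi]

open MvPolynomial in
/-- the classes `φ_k = Π_i u_i^{Ψ_i(k)}`, for `k` ranging over the lattice
points of the support of the smooth fan `Σ`, form a ℂ-basis of the Stanley–Reisner ring
`ℂ[u_1,…,u_m]/I_SR`, where `I_SR` is generated by the square-free monomials
`Π_{i∈I} u_i` for `I` such that `σ_I` is not a cone of `Σ`. -/
theorem phi_basis_of_SR_ring {D m : ℕ} (F : SmoothFan D m)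
    (ISR : Ideal (MvPolynomial (Fin m) ℂ))
    (hISR : ISR = Ideal.span
      {P | ∃ I : Finset (Fin m), I ∉ F.cones ∧ P = ∏ i ∈ I, X i}) :
    LinearIndependent ℂ
      (fun k : {k : Fin D → ℤ // F.InSupport k} =>
        Ideal.Quotient.mk ISR
          (monomial (Finsupp.equivFunOnFinite.symm (F.Psi k.1)) (1 : ℂ))) ∧
    Submodule.span ℂ
      (Set.range (fun k : {k : Fin D → ℤ // F.InSupport k} =>
        Ideal.Quotient.mk ISR
          (monomial (Finsupp.equivFunOnFinite.symm (F.Psi k.1)) (1 : ℂ)))) = ⊤ := by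
  subst hISR
  set S : Set (MvPolynomial (Fin m) ℂ) :=
    {P | ∃ I : Finset (Fin m), I ∉ F.cones ∧ P = ∏ i ∈ I, X i} with hS
  -- ψ̂ and its properties
  set ψ : {k : Fin D → ℤ // F.InSupport k} → (Fin m →₀ ℕ) :=
    fun k => Finsupp.equivFunOnFinite.symm (F.Psi k.1) with hψ
  have hψ_apply : ∀ k i, ψ k i = F.Psi k.1 i := by
    intro k i; simp [hψ]
  have hψ_supp : ∀ k, (ψ k).support ∈ F.cones := by
    intro k
    obtain ⟨⟨I, hI, hs⟩, _⟩ := psi_insupport F k.2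
    apply F.downward I hI
    intro i hi
    exact hs i (by rw [← hψ_apply]; exact Finsupp.mem_support_iff.mp hi)
  have hψ_inj : Function.Injective ψ := by
    intro k l hkl
    have hk := (psi_insupport F k.2).2
    have hl := (psi_insupport F l.2).2
    have : F.Psi k.1 = F.Psi l.1 := by
      funext i; rw [← hψ_apply, ← hψ_apply, hkl]
    ext1
    rw [hk, hl, this]
  have hmks : ∀ (c : ℂ) (q : MvPolynomial (Fin m) ℂ),
      Ideal.Quotient.mk (Ideal.span S) (c • q) = c • Ideal.Quotient.mk (Ideal.span S) q := by
    intro c q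
    rw [MvPolynomial.smul_eq_C_mul, map_mul]
    exact (Algebra.smul_def c (Ideal.Quotient.mk (Ideal.span S) q)).symm
  constructor
  · rw [linearIndependent_iff']
    intro s g hg k hk
    by_contra hgk
    set p : MvPolynomial (Fin m) ℂ := ∑ l ∈ s, monomial (ψ l) (g l) with hp
    have hmem : p ∈ Ideal.span S := by
      rw [← Ideal.Quotient.eq_zero_iff_mem, ← hg, map_sum]
      apply Finset.sum_congr rfl
      intro l _
      have h1 : (monomial (ψ l)) (g l) = g l • (monomial (ψ l)) (1:ℂ) := by
        rw [smul_monomial, smul_eq_mul, mul_one]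
      rw [h1, hmks]
    have hcoeff : p.coeff (ψ k) = g k := by
      rw [hp, MvPolynomial.coeff_sum]
      rw [Finset.sum_eq_single k]
      · simp [MvPolynomial.coeff_monomial]
      · intro l hl hlk
        rw [MvPolynomial.coeff_monomial, if_neg (fun h => hlk (hψ_inj h))]
      · intro h; exact absurd hk h
    have hsupp : ψ k ∈ p.support := MvPolynomial.mem_support_iff.mpr (by rw [hcoeff]; exact hgk)
    exact (mem_ISR_iff F p).mp hmem (ψ k) hsupp (hψ_supp k)
  · rw [eq_top_iff]
    rintro x -
    obtain ⟨p, rfl⟩ := Ideal.Quotient.mk_surjective x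
    rw [MvPolynomial.as_sum p, map_sum]
    apply Submodule.sum_mem
    intro v hv
    have : (monomial v (coeff v p)) = (coeff v p) • monomial v (1:ℂ) := by
      rw [smul_monomial, smul_eq_mul, mul_one]
    rw [this, hmks]
    apply Submodule.smul_mem
    by_cases hvc : v.support ∈ F.cones
    · -- v = ψ of some k
      set k : Fin D → ℤ := ∑ i, ((v i : ℤ)) • F.b i with hk
      have hins : F.InSupport k :=
        ⟨v.support, hvc, ⟨fun i => v i, fun i hi => Finsupp.mem_support_iff.mpr hi, rfl⟩⟩
      have hpsi : F.Psi k = fun i => v i :=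
        psi_spec_s6 F hvc (fun i hi => Finsupp.mem_support_iff.mpr hi)
      apply Submodule.subset_span
      refine ⟨⟨k, hins⟩, ?_⟩
      have hv' : Finsupp.equivFunOnFinite.symm (F.Psi k) = v := by
        rw [hpsi]; exact Finsupp.equivFunOnFinite.symm_apply_apply v
      simp only [hv']
    · have : monomial v (1:ℂ) ∈ Ideal.span S := by
        rw [mem_ISR_iff F]
        intro a ha
        rw [MvPolynomial.support_monomial, if_neg one_ne_zero] at ha
        rw [Finset.mem_singleton.mp ha]
        exact hvc
      rw [Ideal.Quotient.eq_zero_iff_mem.mpr this]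
      exact Submodule.zero_mem _
end

section
/- Existence and uniqueness of formal flows: Let R be a complete Hausdorff linearly topologized ℚ-algebra and let V = Σ_{n≥1} V_n(x) ∂/∂x_n be a formal vector field on Spf(R[[x]]) with V_n(x) ∈ R[[x]] and V_n(x) → 0 as n → ∞. Then there is a unique solution x(t) = (x_n(t)) to dx_n(t)/dt = V_n(x(t)), x_n(0) = x_n, defining a morphism Spf(R[[x]][[t]]) → Spf(R[[x]]); it is given by the exponential φ ↦ exp(tV)φ = Σ_{k≥0} (t^k/k!) V^k(φ). -/
open Filter

/-- The coefficient-wise (product) topology on multivariate formal power series,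
matching the paper's topology on `R[[x]]` (coefficient-wise convergence). -/
noncomputable instance mvPowerSeriesPiTopology (σ R : Type*) [TopologicalSpace R] :
    TopologicalSpace (MvPowerSeries σ R) :=
  inferInstanceAs (TopologicalSpace ((σ →₀ ℕ) → R))

noncomputable instance powerSeriesPiTopology (R : Type*) [TopologicalSpace R] :
    TopologicalSpace (PowerSeries R) :=
  inferInstanceAs (TopologicalSpace (MvPowerSeries Unit R))

/-- `R` is linearly topologized: the ideals contained in a given neighbourhood of `0`
form a fundamental system of neighbourhoods of `0`. -/
def LinearlyTopologized (R : Type*) [Ring R] [TopologicalSpace R] : Prop :=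
  ∀ S ∈ nhds (0 : R), ∃ I : Ideal R, (I : Set R) ⊆ S ∧ (I : Set R) ∈ nhds (0 : R)

open Finset

section Aux

variable {R A : Type*} [CommRing R] [CommRing A] [Algebra R A]

lemma deriv_iter_add (V : Derivation R A A) (k : ℕ) (f g : A) :
    (⇑V)^[k] (f + g) = (⇑V)^[k] f + (⇑V)^[k] g := by
  rw [show (⇑V)^[k] = ⇑(V.toLinearMap ^ k) from funext fun x => (Module.End.pow_apply _ _ _).symm]
  exact map_add _ _ _

lemma deriv_iter_zero (V : Derivation R A A) (k : ℕ) : (⇑V)^[k] (0 : A) = 0 :=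
  Function.iterate_fixed (map_zero V) k

lemma deriv_iter_leibniz (V : Derivation R A A) (k : ℕ) (f g : A) :
    (⇑V)^[k] (f * g) =
      ∑ i ∈ range (k + 1), (k.choose i) • ((⇑V)^[i] f * (⇑V)^[k - i] g) := by
  have hlin : ∀ (n : ℕ), (⇑V)^[n] = ⇑(V.toLinearMap ^ n) := by
    intro n
    funext x
    exact (Module.End.pow_apply _ _ _).symm
  induction k generalizing f g with
  | zero => simp
  | succ k ih =>
    have h1 : (⇑V)^[k+1] (f * g) = (⇑V)^[k] (V (f * g)) :=
      Function.iterate_succ_apply _ _ _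
    rw [h1, Derivation.leibniz, smul_eq_mul, smul_eq_mul]
    rw [hlin k, map_add, ← hlin k, mul_comm g (V f)]
    rw [ih f (V g), ih (V f) g]
    -- T i = V^[i] f * V^[k+1-i] g
    set T : ℕ → A := fun i => (⇑V)^[i] f * (⇑V)^[k + 1 - i] g with hT
    have e1 : ∑ i ∈ range (k + 1), (k.choose i) • ((⇑V)^[i] f * (⇑V)^[k - i] (V g))
        = ∑ i ∈ range (k + 1), (k.choose i) • T i := by
      refine Finset.sum_congr rfl fun i hi => ?_
      have hik : i ≤ k := Nat.lt_succ_iff.mp (mem_range.mp hi)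
      have : (⇑V)^[k - i] (V g) = (⇑V)^[k + 1 - i] g := by
        rw [← Function.iterate_succ_apply]
        congr 1
        omega
      rw [this]
    have e2 : ∑ i ∈ range (k + 1), (k.choose i) • ((⇑V)^[i] (V f) * (⇑V)^[k - i] g)
        = ∑ i ∈ range (k + 1), (k.choose i) • T (i + 1) := by
      refine Finset.sum_congr rfl fun i hi => ?_
      have : (⇑V)^[i] (V f) = (⇑V)^[i + 1] f := (Function.iterate_succ_apply _ _ _).symm
      have hki : k + 1 - (i + 1) = k - i := by omega
      rw [this, hT]
      simp only [hki]
    rw [e1, e2]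
    -- RHS
    have h3 : ∑ i ∈ range (k + 1), (k.choose (i+1)) • T (i + 1) + T 0
          = ∑ i ∈ range (k + 1), (k.choose i) • T i := by
      calc ∑ i ∈ range (k + 1), k.choose (i+1) • T (i + 1) + T 0
          = ∑ i ∈ range (k + 1), k.choose (i+1) • T (i + 1) + k.choose 0 • T 0 := by
            rw [Nat.choose_zero_right, one_smul]
        _ = ∑ i ∈ range (k + 2), k.choose i • T i :=
            (Finset.sum_range_succ' (fun i => k.choose i • T i) (k+1)).symm
        _ = ∑ i ∈ range (k + 1), k.choose i • T i := by
            rw [Finset.sum_range_succ]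
            simp [Nat.choose_succ_self]
    have eR : ∑ i ∈ range (k + 2), ((k+1).choose i) • T i
        = ∑ i ∈ range (k + 1), (k.choose i) • T i
          + ∑ i ∈ range (k + 1), (k.choose i) • T (i + 1) := by
      rw [Finset.sum_range_succ' (fun i => ((k+1).choose i) • T i)]
      simp only [Nat.choose_succ_succ, Nat.succ_eq_add_one, Nat.choose_zero_right, one_smul,
        add_smul, Finset.sum_add_distrib]
      rw [add_assoc, h3, add_comm]
    rw [eR]

variable [Algebra ℚ A]

/-- The exponential flow `f ↦ Σ_k (t^k/k!) V^k(f)` as a ring homomorphism. -/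
noncomputable def expFlow (V : Derivation R A A) : A →+* PowerSeries A where
  toFun f := PowerSeries.mk fun k => (k.factorial : ℚ)⁻¹ • (⇑V)^[k] f
  map_one' := by
    ext k
    rw [PowerSeries.coeff_mk, PowerSeries.coeff_one]
    cases k with
    | zero => simp
    | succ k =>
      rw [Function.iterate_succ_apply, Derivation.map_one_eq_zero, deriv_iter_zero]
      simp
  map_mul' f g := by
    ext k
    rw [PowerSeries.coeff_mk, PowerSeries.coeff_mul,
      Finset.Nat.sum_antidiagonal_eq_sum_range_succ_mk]
    simp only [PowerSeries.coeff_mk]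
    rw [deriv_iter_leibniz, Finset.smul_sum]
    refine Finset.sum_congr rfl fun i hi => ?_
    have hik : i ≤ k := Nat.lt_succ_iff.mp (mem_range.mp hi)
    rw [smul_mul_smul_comm, ← Nat.cast_smul_eq_nsmul ℚ (k.choose i), smul_smul]
    congr 1
    have hcast : (k.choose i : ℚ) * (i.factorial : ℚ) * ((k - i).factorial : ℚ)
        = (k.factorial : ℚ) := by
      exact_mod_cast congrArg (Nat.cast : ℕ → ℚ) (Nat.choose_mul_factorial_mul_factorial hik)
    have h1 : (i.factorial : ℚ) ≠ 0 := Nat.cast_ne_zero.mpr i.factorial_ne_zero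
    have h2 : ((k - i).factorial : ℚ) ≠ 0 := Nat.cast_ne_zero.mpr (k - i).factorial_ne_zero
    have h3 : (k.factorial : ℚ) ≠ 0 := Nat.cast_ne_zero.mpr k.factorial_ne_zero
    field_simp
    linear_combination hcast
  map_zero' := by
    ext k
    rw [PowerSeries.coeff_mk, deriv_iter_zero]
    simp
  map_add' f g := by
    ext k
    simp only [PowerSeries.coeff_mk, map_add, deriv_iter_add, smul_add]

lemma expFlow_coeff (V : Derivation R A A) (f : A) (k : ℕ) :
    PowerSeries.coeff (R := A) k (expFlow V f) = (k.factorial : ℚ)⁻¹ • (⇑V)^[k] f := by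
  rw [show (expFlow V f) = PowerSeries.mk (fun k => (k.factorial : ℚ)⁻¹ • (⇑V)^[k] f) from rfl,
    PowerSeries.coeff_mk]

end Aux

/-- existence and uniqueness of formal flows.  Let `R` be a complete
Hausdorff linearly topologized ℚ-algebra and `V = Σ_n V_n(x) ∂/∂x_n` a formal vector
field on `Spf R[[x]]`, recorded as a continuous `R`-derivation of `R[[x]]` with
`V(x_n) → 0`.  Then there is a unique solution of `dx_n(t)/dt = V_n(x(t))`,
`x_n(0) = x_n`, defining a morphism `Spf R[[x]][[t]] → Spf R[[x]]`: equivalently, a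
unique continuous ring homomorphism `Φ : R[[x]] → R[[x]][[t]]` with `Φ(φ)|_{t=0} = φ`
and `d/dt Φ(φ) = Φ(V φ)`; it is given by the exponential
`Φ(φ) = Σ_k (t^k/k!) V^k(φ)`. -/
theorem formal_flow_exists_unique
    (R : Type*) [CommRing R] [Algebra ℚ R] [UniformSpace R] [IsUniformAddGroup R]
    [CompleteSpace R] [T2Space R] [IsTopologicalRing R]
    (hlin : LinearlyTopologized R)
    (V : Derivation R (MvPowerSeries ℕ R) (MvPowerSeries ℕ R))
    (hVcont : Continuous V)
    (hVtend : Tendsto (fun n => V (MvPowerSeries.X n)) atTop (nhds 0)) :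
    ∃ Φ : MvPowerSeries ℕ R →+* PowerSeries (MvPowerSeries ℕ R),
      ((Continuous Φ ∧
        (∀ f, PowerSeries.constantCoeff (Φ f) = f) ∧
        (∀ f k, (k + 1 : ℕ) • PowerSeries.coeff (R := MvPowerSeries ℕ R) (k + 1) (Φ f) =
          PowerSeries.coeff (R := MvPowerSeries ℕ R) k (Φ (V f)))) ∧
       (∀ f k, PowerSeries.coeff (R := MvPowerSeries ℕ R) k (Φ f) =
          ((k.factorial : ℚ)⁻¹) • (⇑V)^[k] f)) ∧
      (∀ Φ' : MvPowerSeries ℕ R →+* PowerSeries (MvPowerSeries ℕ R),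
        (Continuous Φ' ∧
         (∀ f, PowerSeries.constantCoeff (Φ' f) = f) ∧
         (∀ f k, (k + 1 : ℕ) • PowerSeries.coeff (R := MvPowerSeries ℕ R) (k + 1) (Φ' f) =
            PowerSeries.coeff (R := MvPowerSeries ℕ R) k (Φ' (V f)))) → Φ' = Φ) := by
  set A := MvPowerSeries ℕ R
  refine ⟨expFlow V, ⟨⟨?_, ?_, ?_⟩, fun f k => expFlow_coeff V f k⟩, ?_⟩
  · -- continuity
    have hsmul : ∀ q : ℚ, Continuous fun x : A => q • x := by
      intro q
      have hq : (fun x : A => q • x)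
          = fun x : A => (fun m => algebraMap ℚ R q * x m : (ℕ →₀ ℕ) → R) := by
        funext x
        funext m
        exact Algebra.smul_def q (x m)
      rw [hq]
      refine continuous_pi fun m => ?_
      exact (continuous_mul_left (algebraMap ℚ R q)).comp (continuous_apply m)
    refine continuous_pi fun d => ?_
    show Continuous fun f : A =>
      ((d ()).factorial : ℚ)⁻¹ • (⇑V)^[d ()] f
    exact (hsmul _).comp (hVcont.iterate _)
  · intro f
    rw [← PowerSeries.coeff_zero_eq_constantCoeff_apply, expFlow_coeff]
    simp
  · intro f k
    rw [expFlow_coeff, expFlow_coeff, ← Function.iterate_succ_apply,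
      ← Nat.cast_smul_eq_nsmul ℚ (k + 1), smul_smul]
    congr 1
    rw [Nat.factorial_succ]
    have h1 : ((k + 1 : ℕ) : ℚ) ≠ 0 := by positivity
    have h3 : (k.factorial : ℚ) ≠ 0 := Nat.cast_ne_zero.mpr k.factorial_ne_zero
    push_cast
    field_simp
  · rintro Φ' ⟨-, h0, hrec⟩
    have key : ∀ k (f : A), PowerSeries.coeff (R := A) k (Φ' f) = (k.factorial : ℚ)⁻¹ • (⇑V)^[k] f := by
      intro k
      induction k with
      | zero =>
        intro f
        rw [PowerSeries.coeff_zero_eq_constantCoeff_apply, h0]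
        simp
      | succ k ih =>
        intro f
        have h := hrec f k
        rw [ih (V f), ← Function.iterate_succ_apply] at h
        have h1 : ((k + 1 : ℕ) : ℚ) ≠ 0 := by positivity
        have : PowerSeries.coeff (R := A) (k + 1) (Φ' f)
            = ((k + 1 : ℕ) : ℚ)⁻¹ • ((k.factorial : ℚ)⁻¹ • (⇑V)^[k + 1] f) := by
          rw [← h, ← Nat.cast_smul_eq_nsmul ℚ (k + 1), smul_smul, inv_mul_cancel₀ h1, one_smul]
        rw [this, smul_smul]
        congr 1
        rw [Nat.factorial_succ]
        push_cast
        have h3 : (k.factorial : ℚ) ≠ 0 := Nat.cast_ne_zero.mpr k.factorial_ne_zero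
        field_simp
    ext f : 1
    ext k
    rw [key k f, expFlow_coeff]
end

section
/- Time-one flow: With R, x, V as in the formal flow theorem, let I ⊆ R be an ideal such that for every open neighbourhood R_ν of 0 there exists n with I^n ⊆ R_ν. If V_n(x) ∈ I[[x]] for all n, then V^k(φ) → 0 as k → ∞ uniformly in φ ∈ R[[x]], the substitution t = 1 in exp(tV)φ converges, and one obtains a well-defined time-one flow automorphism Spf(R[[x]]) → Spf(R[[x]]). -/
open Filter

/-! ### Auxiliary material -/

set_option linter.unusedSectionVars false

/-- Iterated Leibniz rule for a derivation on a commutative algebra. -/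
theorem Derivation.iterate_leibniz {R A : Type*} [CommRing R] [CommRing A] [Algebra R A]
    (W : Derivation R A A) {n : ℕ} (p q : A) :
    (⇑W)^[n] (p * q) =
      ∑ k ∈ Finset.range n.succ, (n.choose k • ((⇑W)^[n - k] p * (⇑W)^[k] q)) := by
  have deriv_mul : ∀ a b : A, W (a * b) = W a * b + a * W b := by
    intro a b
    rw [Derivation.leibniz, smul_eq_mul, smul_eq_mul, add_comm, mul_comm b]
  have hWn : ∀ (m : ℕ) (x : A), W (m • x) = m • W x := fun m x => by
    rw [← Nat.cast_smul_eq_nsmul R, Derivation.map_smul, Nat.cast_smul_eq_nsmul]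
  open Finset in
  induction n with
  | zero => simp [Finset.range]
  | succ n IH =>
    calc
      (⇑W)^[n + 1] (p * q) =
          W (∑ k ∈ range n.succ,
              n.choose k • ((⇑W)^[n - k] p * (⇑W)^[k] q)) := by
        rw [Function.iterate_succ_apply', IH]
      _ = (∑ k ∈ range n.succ,
            n.choose k • ((⇑W)^[n - k + 1] p * (⇑W)^[k] q)) +
          ∑ k ∈ range n.succ,
            n.choose k • ((⇑W)^[n - k] p * (⇑W)^[k + 1] q) := by
        simp_rw [map_sum, hWn, deriv_mul, Function.iterate_succ_apply',
          smul_add, sum_add_distrib]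
      _ = (∑ k ∈ range n.succ,
                n.choose k.succ • ((⇑W)^[n - k] p * (⇑W)^[k + 1] q)) +
              1 • ((⇑W)^[n + 1] p * (⇑W)^[0] q) +
            ∑ k ∈ range n.succ, n.choose k • ((⇑W)^[n - k] p * (⇑W)^[k + 1] q) :=
        ?_
      _ = ((∑ k ∈ range n.succ, n.choose k • ((⇑W)^[n - k] p * (⇑W)^[k + 1] q)) +
              ∑ k ∈ range n.succ,
                n.choose k.succ • ((⇑W)^[n - k] p * (⇑W)^[k + 1] q)) +
            1 • ((⇑W)^[n + 1] p * (⇑W)^[0] q) := by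
        rw [add_comm, add_assoc]
      _ = (∑ i ∈ range n.succ,
              (n + 1).choose (i + 1) • ((⇑W)^[n + 1 - (i + 1)] p * (⇑W)^[i + 1] q)) +
            1 • ((⇑W)^[n + 1] p * (⇑W)^[0] q) := by
        simp_rw [Nat.choose_succ_succ, Nat.succ_sub_succ, add_smul, sum_add_distrib]
      _ = ∑ k ∈ range n.succ.succ,
            n.succ.choose k • ((⇑W)^[n.succ - k] p * (⇑W)^[k] q) := by
        rw [sum_range_succ' _ n.succ, Nat.choose_zero_right, tsub_zero]
    congr
    refine (Finset.sum_range_succ' _ _).trans (congr_arg₂ (· + ·) ?_ ?_)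
    · rw [Finset.sum_range_succ, Nat.choose_succ_self, zero_smul, add_zero]
      refine Finset.sum_congr rfl fun k hk => ?_
      rw [Finset.mem_range] at hk
      congr
      omega
    · rw [Nat.choose_zero_right, tsub_zero]

section Aux

open MvPowerSeries

variable {R : Type*} [CommRing R] [Algebra ℚ R] [UniformSpace R] [IsUniformAddGroup R]
  [CompleteSpace R] [T2Space R] [IsTopologicalRing R]

/-! #### Topological structure on `MvPowerSeries ℕ R` -/

noncomputable instance mvPSUniform : UniformSpace (MvPowerSeries ℕ R) :=
  inferInstanceAs (UniformSpace ((ℕ →₀ ℕ) → R))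

instance : IsUniformAddGroup (MvPowerSeries ℕ R) :=
  inferInstanceAs (IsUniformAddGroup ((ℕ →₀ ℕ) → R))

instance : CompleteSpace (MvPowerSeries ℕ R) :=
  inferInstanceAs (CompleteSpace ((ℕ →₀ ℕ) → R))

instance : T3Space (MvPowerSeries ℕ R) :=
  inferInstanceAs (T3Space ((ℕ →₀ ℕ) → R))

lemma contCoeff (d : ℕ →₀ ℕ) : Continuous fun f : MvPowerSeries ℕ R => coeff d f :=
  continuous_apply d

instance : ContinuousMul (MvPowerSeries ℕ R) := by
  constructor
  apply continuous_pi fun d => ?_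
  have h : (fun p : MvPowerSeries ℕ R × MvPowerSeries ℕ R => coeff d (p.1 * p.2))
      = fun p => ∑ q ∈ Finset.HasAntidiagonal.antidiagonal d, coeff q.1 p.1 * coeff q.2 p.2 := by
    funext p; exact coeff_mul d p.1 p.2
  show Continuous fun p : MvPowerSeries ℕ R × MvPowerSeries ℕ R => coeff d (p.1 * p.2)
  rw [h]
  exact continuous_finset_sum _ fun q _ =>
    ((continuous_apply q.1).comp continuous_fst).mul ((continuous_apply q.2).comp continuous_snd)

instance : IsTopologicalRing (MvPowerSeries ℕ R) := { }

/-! #### Rational scalars -/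

lemma coeff_qsmul (q : ℚ) (f : MvPowerSeries ℕ R) (d : ℕ →₀ ℕ) :
    coeff d (q • f) = q • coeff d f := by
  rw [← algebraMap_smul R q f, coeff_smul, ← Algebra.smul_def, ← algebraMap_smul R q
    (coeff d f), Algebra.smul_def]

lemma qsmul_mem_ideal {q : ℚ} {x : R} {J : Ideal R} (hx : x ∈ J) : q • x ∈ J := by
  rw [← algebraMap_smul R q x, smul_eq_mul]
  exact Ideal.mul_mem_left J _ hx

lemma contQSmulR (q : ℚ) : Continuous fun x : R => q • x := by
  have h : (fun x : R => q • x) = fun x => algebraMap ℚ R q * x := by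
    funext x; rw [← algebraMap_smul R q x, smul_eq_mul]
  rw [h]; exact continuous_const.mul continuous_id

lemma contQSmul (q : ℚ) : Continuous fun f : MvPowerSeries ℕ R => q • f := by
  apply continuous_pi fun d => ?_
  show Continuous fun f : MvPowerSeries ℕ R => coeff d (q • f)
  simp only [coeff_qsmul]
  exact (contQSmulR q).comp (contCoeff d)

/-! #### Closed ideals and powers of `I` -/

lemma idealClosed (J : Ideal R) (h : (J : Set R) ∈ nhds 0) : IsClosed (J : Set R) :=
  AddSubgroup.isClosed_of_isOpen _ (AddSubgroup.isOpen_of_mem_nhds J.toAddSubgroup (g := 0) h)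

variable {I : Ideal R}

/-- The topological closure of `I ^ k`. -/
noncomputable def Icl (I : Ideal R) (k : ℕ) : Ideal R := (I ^ k).topologicalClosure

lemma Icl_mul {j k : ℕ} {x y : R} (hx : x ∈ Icl I j) (hy : y ∈ Icl I k) :
    x * y ∈ Icl I (j + k) := by
  refine map_mem_closure₂ continuous_mul hx hy ?_
  intro a ha b hb
  have h : a * b ∈ I ^ j * I ^ k := Ideal.mul_mem_mul ha hb
  rwa [← pow_add] at h

lemma Icl_antitone {j k : ℕ} (h : j ≤ k) : Icl I k ≤ Icl I j := fun _ hx =>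
  closure_mono (fun _ hy => Ideal.pow_le_pow_right h hy) hx

lemma Icl_subset_of_pow_subset {J : Ideal R} (hJn : (J : Set R) ∈ nhds 0) {n : ℕ}
    (hn : ((I ^ n : Ideal R) : Set R) ⊆ J) {k : ℕ} (hk : n ≤ k) :
    (Icl I k : Set R) ⊆ J := by
  intro x hx
  have h1 : x ∈ Icl I n := Icl_antitone hk hx
  have h2 : closure ((I ^ n : Ideal R) : Set R) ⊆ J :=
    (idealClosed J hJn).closure_eq ▸ closure_mono hn
  exact h2 h1

/-! #### Coefficients of iterates of the derivation -/

variable (W : Derivation R (MvPowerSeries ℕ R) (MvPowerSeries ℕ R))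

lemma coeff_W_mul {f g : MvPowerSeries ℕ R}
    (hf : ∀ e, coeff e (W f) ∈ I) (hg : ∀ e, coeff e (W g) ∈ I) :
    ∀ e, coeff e (W (f * g)) ∈ I := by
  intro e
  rw [Derivation.leibniz, map_add]
  refine Ideal.add_mem I ?_ ?_
  · show coeff e (f * W g) ∈ I
    rw [coeff_mul]
    exact Ideal.sum_mem I fun q _ => Ideal.mul_mem_left I _ (hg q.2)
  · show coeff e (g * W f) ∈ I
    rw [coeff_mul]
    exact Ideal.sum_mem I fun q _ => Ideal.mul_mem_left I _ (hf q.2)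

lemma coeff_W_monomial (hWI : ∀ n e, coeff e (W (X n)) ∈ I) (d : ℕ →₀ ℕ) :
    ∀ e, coeff e (W (monomial d 1)) ∈ I := by
  induction d using Finsupp.induction with
  | zero =>
    intro e
    have h : (monomial (0 : ℕ →₀ ℕ) (1 : R)) = 1 := rfl
    rw [h, Derivation.map_one_eq_zero, map_zero]; exact Ideal.zero_mem I
  | single_add a b f _ _ ih =>
    have hXa : ∀ (m : ℕ) (e : _), coeff e (W ((X a : MvPowerSeries ℕ R) ^ m)) ∈ I := by
      intro m
      induction m with
      | zero =>
        intro e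
        rw [pow_zero, Derivation.map_one_eq_zero, map_zero]; exact Ideal.zero_mem I
      | succ m ihm =>
        intro e
        rw [pow_succ]
        exact coeff_W_mul W ihm (hWI a) e
    have hmono : (monomial (Finsupp.single a b + f) (1 : R))
        = (X a : MvPowerSeries ℕ R) ^ b * monomial f 1 := by
      rw [X_pow_eq, monomial_mul_monomial, one_mul]
    rw [hmono]
    exact coeff_W_mul W (hXa b) ih

lemma trunc_tendsto (φ : MvPowerSeries ℕ R) :
    Tendsto (fun F : Finset (ℕ →₀ ℕ) => (∑ d ∈ F, monomial d (coeff d φ)))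
      atTop (nhds φ) := by
  apply tendsto_pi_nhds.2
  intro e
  have h : ∀ᶠ F : Finset (ℕ →₀ ℕ) in atTop, e ∈ F := eventually_atTop.2 ⟨{e}, fun F hF =>
    hF (Finset.mem_singleton_self e)⟩
  refine Tendsto.congr' ?_ tendsto_const_nhds
  filter_upwards [h] with F hF
  show coeff e φ = coeff e (∑ d ∈ F, monomial d (coeff d φ))
  rw [map_sum, Finset.sum_eq_single e]
  · rw [coeff_monomial_same]
  · intro b _ hb
    rw [coeff_monomial, if_neg (Ne.symm hb)]
  · intro h'; exact absurd hF h'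

lemma coeff_W_of_coeff_mem (hWcont : Continuous W) (hWI : ∀ n e, coeff e (W (X n)) ∈ I)
    (T : Ideal R) {φ : MvPowerSeries ℕ R} (hφ : ∀ d, coeff d φ ∈ T) :
    ∀ d, coeff d (W φ) ∈ (I * T).topologicalClosure := by
  have hA : IsClosed {f : MvPowerSeries ℕ R |
      ∀ d, coeff d (W f) ∈ (I * T).topologicalClosure} := by
    rw [Set.setOf_forall]
    refine isClosed_iInter fun d => ?_
    exact IsClosed.preimage ((contCoeff d).comp hWcont)
      (Submodule.isClosed_topologicalClosure _)
  have htr : ∀ F : Finset (ℕ →₀ ℕ),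
      (∑ d ∈ F, monomial d (coeff d φ)) ∈ {f : MvPowerSeries ℕ R |
        ∀ d, coeff d (W f) ∈ (I * T).topologicalClosure} := by
    intro F d
    rw [map_sum, map_sum]
    refine Ideal.sum_mem _ fun b _ => ?_
    have h1 : (monomial b (coeff b φ)) = (coeff b φ) • monomial b (1 : R) := by
      ext e
      rw [coeff_smul, coeff_monomial, coeff_monomial]
      split <;> simp
    rw [h1, Derivation.map_smul, coeff_smul]
    refine Submodule.le_topologicalClosure _ ?_
    rw [mul_comm I T]
    exact Ideal.mul_mem_mul (hφ b) (coeff_W_monomial W hWI b d)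
  exact hA.mem_of_tendsto (trunc_tendsto φ) (Eventually.of_forall htr)

lemma coeff_iterate_mem (hWcont : Continuous W) (hWI : ∀ n e, coeff e (W (X n)) ∈ I) :
    ∀ (k : ℕ) (φ : MvPowerSeries ℕ R) (d : ℕ →₀ ℕ), coeff d ((⇑W)^[k] φ) ∈ Icl I k := by
  intro k
  induction k with
  | zero =>
    intro φ d
    refine Submodule.le_topologicalClosure _ ?_
    simp [pow_zero, Ideal.one_eq_top]
  | succ k ih =>
    intro φ d
    rw [Function.iterate_succ_apply']
    have h1 := coeff_W_of_coeff_mem W hWcont hWI (Icl I k) (fun e => ih φ e) d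
    have h2 : (I * Icl I k).topologicalClosure ≤ Icl I (k + 1) := by
      refine Submodule.topologicalClosure_minimal _ ?_ (Submodule.isClosed_topologicalClosure _)
      refine Ideal.mul_le.mpr fun i hi c hc => ?_
      have hi' : i ∈ Icl I 1 := Submodule.le_topologicalClosure _ (by simpa [pow_one] using hi)
      have h3 : i * c ∈ Icl I (1 + k) := Icl_mul hi' hc
      rwa [add_comm] at h3
    exact h2 h1

/-! #### Neighbourhood basis and summability -/

lemma nhds_zero_basis' (S : Set (MvPowerSeries ℕ R)) (hS : S ∈ nhds (0 : MvPowerSeries ℕ R)) :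
    ∃ (F : Finset (ℕ →₀ ℕ)) (U : Set R), U ∈ nhds (0 : R) ∧
      {φ : MvPowerSeries ℕ R | ∀ d ∈ F, coeff d φ ∈ U} ⊆ S := by
  have hS' : (S : Set ((ℕ →₀ ℕ) → R)) ∈ nhds (0 : (ℕ →₀ ℕ) → R) := hS
  rw [nhds_pi] at hS'
  obtain ⟨Iset, hIfin, t, ht, hsub⟩ := Filter.mem_pi.1 hS'
  refine ⟨hIfin.toFinset, ⋂ d ∈ hIfin.toFinset, t d, ?_, ?_⟩
  · exact (Filter.biInter_finset_mem _).mpr fun d _ => ht d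
  · intro φ hφ
    refine hsub fun d hd => ?_
    have hd' : d ∈ hIfin.toFinset := hIfin.mem_toFinset.mpr hd
    exact Set.mem_iInter₂.mp (hφ d hd') d hd'

lemma summable_coeff_decay (hlin : LinearlyTopologized R)
    (hI : ∀ S ∈ nhds (0 : R), ∃ n : ℕ, ((I ^ n : Ideal R) : Set R) ⊆ S)
    {ι : Type*} (a : ι → MvPowerSeries ℕ R) (N : ι → ℕ)
    (hmem : ∀ i d, coeff d (a i) ∈ Icl I (N i)) (hfin : ∀ n, {i | N i < n}.Finite) :
    Summable a := by
  rw [summable_iff_vanishing]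
  intro e he
  obtain ⟨F, U, hU, hFU⟩ := nhds_zero_basis' e he
  obtain ⟨J, hJU, hJn⟩ := hlin U hU
  obtain ⟨n, hn⟩ := hI _ hJn
  refine ⟨(hfin n).toFinset, fun t ht => ?_⟩
  refine hFU fun d _ => ?_
  rw [map_sum]
  refine hJU (Ideal.sum_mem J fun i hi => ?_)
  have hNi : n ≤ N i := by
    by_contra hcon
    exact (Finset.disjoint_left.mp ht hi) ((hfin n).mem_toFinset.mpr (Nat.lt_of_not_le hcon))
  exact Icl_subset_of_pow_subset hJn hn hNi (hmem i d)

/-! #### The exponential of a derivation -/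

/-- The `k`-th term of the exponential series. -/
noncomputable def expTerm (φ : MvPowerSeries ℕ R) (k : ℕ) : MvPowerSeries ℕ R :=
  ((k.factorial : ℚ)⁻¹) • (⇑W)^[k] φ

lemma coeff_expTerm_mem (hWcont : Continuous W) (hWI : ∀ n e, coeff e (W (X n)) ∈ I)
    (φ : MvPowerSeries ℕ R) (k : ℕ) (d : ℕ →₀ ℕ) :
    coeff d (expTerm W φ k) ∈ Icl I k := by
  rw [expTerm, coeff_qsmul]
  exact qsmul_mem_ideal (coeff_iterate_mem W hWcont hWI k φ d)

lemma summable_expTerm (hlin : LinearlyTopologized R)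
    (hI : ∀ S ∈ nhds (0 : R), ∃ n : ℕ, ((I ^ n : Ideal R) : Set R) ⊆ S)
    (hWcont : Continuous W) (hWI : ∀ n e, coeff e (W (X n)) ∈ I)
    (φ : MvPowerSeries ℕ R) : Summable (expTerm W φ) :=
  summable_coeff_decay hlin hI _ id (fun k d => coeff_expTerm_mem W hWcont hWI φ k d)
    (fun n => (Set.finite_Iio n).subset fun _ h => h)

/-- The exponential map `exp W`. -/
noncomputable def ExpMap (φ : MvPowerSeries ℕ R) : MvPowerSeries ℕ R :=
  ∑' k, expTerm W φ k

lemma hasSum_exp (hlin : LinearlyTopologized R)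
    (hI : ∀ S ∈ nhds (0 : R), ∃ n : ℕ, ((I ^ n : Ideal R) : Set R) ⊆ S)
    (hWcont : Continuous W) (hWI : ∀ n e, coeff e (W (X n)) ∈ I)
    (φ : MvPowerSeries ℕ R) : HasSum (expTerm W φ) (ExpMap W φ) :=
  (summable_expTerm W hlin hI hWcont hWI φ).hasSum

/-! #### Algebraic properties of iterates -/

lemma iter_add (k : ℕ) (a b : MvPowerSeries ℕ R) :
    (⇑W)^[k] (a + b) = (⇑W)^[k] a + (⇑W)^[k] b := by
  induction k with
  | zero => rfl
  | succ k ih => rw [Function.iterate_succ_apply', Function.iterate_succ_apply',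
      Function.iterate_succ_apply', ih, map_add]

lemma iter_zero (k : ℕ) : (⇑W)^[k] (0 : MvPowerSeries ℕ R) = 0 := by
  induction k with
  | zero => rfl
  | succ k ih => rw [Function.iterate_succ_apply, map_zero, ih]

lemma iter_qsmul (k : ℕ) (q : ℚ) (a : MvPowerSeries ℕ R) :
    (⇑W)^[k] (q • a) = q • (⇑W)^[k] a := by
  induction k with
  | zero => rfl
  | succ k ih =>
    rw [Function.iterate_succ_apply', Function.iterate_succ_apply', ih,
      ← algebraMap_smul R q ((⇑W)^[k] a), Derivation.map_smul, algebraMap_smul]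

lemma iter_cont (hWcont : Continuous W) (k : ℕ) : Continuous ((⇑W)^[k]) := by
  induction k with
  | zero => exact continuous_id
  | succ k ih => rw [Function.iterate_succ]; exact ih.comp hWcont

/-- `(⇑W)^[k]` as an additive monoid hom. -/
noncomputable def iterHom (k : ℕ) : MvPowerSeries ℕ R →+ MvPowerSeries ℕ R :=
  AddMonoidHom.mk' ((⇑W)^[k]) (iter_add W k)

lemma neg_iter (k : ℕ) (a : MvPowerSeries ℕ R) :
    (⇑(-W))^[k] a = ((-1 : ℚ) ^ k) • (⇑W)^[k] a := by
  induction k with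
  | zero => simp
  | succ k ih =>
    rw [Function.iterate_succ_apply', Function.iterate_succ_apply', ih]
    have h : (-W) (((-1 : ℚ) ^ k) • (⇑W)^[k] a) = ((-1 : ℚ) ^ k) • (-W) ((⇑W)^[k] a) := by
      rw [← algebraMap_smul R ((-1 : ℚ) ^ k), Derivation.map_smul, algebraMap_smul]
    rw [h]
    show ((-1 : ℚ) ^ k) • (-(W ((⇑W)^[k] a))) = ((-1 : ℚ) ^ (k + 1)) • W ((⇑W)^[k] a)
    rw [← neg_one_smul ℚ (W ((⇑W)^[k] a)), smul_smul, ← pow_succ]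

instance : ContinuousConstSMul ℚ (MvPowerSeries ℕ R) := ⟨contQSmul⟩

lemma exp_term_zero (k : ℕ) : expTerm W (0 : MvPowerSeries ℕ R) k = 0 := by
  rw [expTerm, iter_zero, smul_zero]

lemma exp_map_zero : ExpMap W (0 : MvPowerSeries ℕ R) = 0 := by
  unfold ExpMap
  simp only [exp_term_zero, tsum_zero]

section WithHyp

lemma exp_term_one (k : ℕ) :
    expTerm W (1 : MvPowerSeries ℕ R) k = if k = 0 then 1 else 0 := by
  cases k with
  | zero => simp [expTerm]
  | succ k =>
    rw [expTerm, Function.iterate_succ_apply, Derivation.map_one_eq_zero, iter_zero, smul_zero]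
    simp


variable (hlin : LinearlyTopologized R)
  (hI : ∀ S ∈ nhds (0 : R), ∃ n : ℕ, ((I ^ n : Ideal R) : Set R) ⊆ S)
  (hWcont : Continuous W) (hWI : ∀ n e, coeff e (W (X n)) ∈ I)

include hlin hI hWcont hWI

lemma exp_map_add (φ ψ : MvPowerSeries ℕ R) :
    ExpMap W (φ + ψ) = ExpMap W φ + ExpMap W ψ := by
  have h1 := (hasSum_exp W hlin hI hWcont hWI φ).add (hasSum_exp W hlin hI hWcont hWI ψ)
  have h2 : (fun k => expTerm W φ k + expTerm W ψ k) = expTerm W (φ + ψ) := by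
    funext k
    rw [expTerm, expTerm, expTerm, iter_add, smul_add]
  rw [h2] at h1
  exact (hasSum_exp W hlin hI hWcont hWI (φ + ψ)).unique h1

lemma exp_map_one : ExpMap W (1 : MvPowerSeries ℕ R) = 1 := by
  have h1 : HasSum (expTerm W (1 : MvPowerSeries ℕ R)) 1 := by
    have h2 := hasSum_ite_eq (0 : ℕ) (1 : MvPowerSeries ℕ R)
    refine HasSum.congr_fun h2 ?_
    intro k
    rw [exp_term_one]
  exact (hasSum_exp W hlin hI hWcont hWI 1).unique h1

/-- generic summable family of rational multiples of iterates along pairs -/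
lemma summable_qsmul_pair (g : ℕ × ℕ → ℚ) (φ : MvPowerSeries ℕ R) :
    Summable (fun p : ℕ × ℕ => g p • (⇑W)^[p.1 + p.2] φ) := by
  refine summable_coeff_decay hlin hI _ (fun p => p.1 + p.2) ?_ ?_
  · intro p d
    rw [coeff_qsmul]
    exact qsmul_mem_ideal (coeff_iterate_mem W hWcont hWI _ φ d)
  · intro n
    refine ((Finset.range n ×ˢ Finset.range n).finite_toSet).subset ?_
    rintro ⟨i, j⟩ h
    simp only [Set.mem_setOf_eq] at h
    simp only [Finset.coe_product, Set.mem_prod, Finset.mem_coe, Finset.mem_range]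
    omega

lemma summable_mul_pair (φ ψ : MvPowerSeries ℕ R) :
    Summable (fun p : ℕ × ℕ => expTerm W φ p.1 * expTerm W ψ p.2) := by
  refine summable_coeff_decay hlin hI _ (fun p => p.1 + p.2) ?_ ?_
  · intro p d
    rw [coeff_mul]
    refine Ideal.sum_mem _ fun q _ => ?_
    exact Icl_mul (coeff_expTerm_mem W hWcont hWI φ p.1 q.1)
      (coeff_expTerm_mem W hWcont hWI ψ p.2 q.2)
  · intro n
    refine ((Finset.range n ×ˢ Finset.range n).finite_toSet).subset ?_
    rintro ⟨i, j⟩ h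
    simp only [Set.mem_setOf_eq] at h
    simp only [Finset.coe_product, Set.mem_prod, Finset.mem_coe, Finset.mem_range]
    omega

lemma factorial_ne' (k : ℕ) : ((k.factorial : ℚ)) ≠ 0 :=
  Nat.cast_ne_zero.mpr k.factorial_ne_zero

lemma antidiagonal_exp_sum (φ ψ : MvPowerSeries ℕ R) (n : ℕ) :
    ∑ kl ∈ Finset.HasAntidiagonal.antidiagonal n, expTerm W φ kl.1 * expTerm W ψ kl.2
      = expTerm W (φ * ψ) n := by
  rw [Finset.Nat.sum_antidiagonal_eq_sum_range_succ_mk]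
  rw [expTerm, Derivation.iterate_leibniz W φ ψ, Finset.smul_sum]
  rw [← Finset.sum_range_reflect]
  refine Finset.sum_congr rfl fun i hi => ?_
  rw [Finset.mem_range, Nat.lt_succ_iff] at hi
  simp only [Nat.succ_sub_one]
  have h1 : n - (n - i) = i := by omega
  rw [h1]
  rw [expTerm, expTerm, smul_mul_assoc, mul_smul_comm, smul_smul]
  rw [← Nat.cast_smul_eq_nsmul ℚ (n.choose i), smul_smul]
  congr 1
  have ha : ((i.factorial : ℚ)) ≠ 0 := Nat.cast_ne_zero.mpr i.factorial_ne_zero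
  have hb : (((n - i).factorial : ℚ)) ≠ 0 := Nat.cast_ne_zero.mpr (n - i).factorial_ne_zero
  have hc : ((n.factorial : ℚ)) ≠ 0 := Nat.cast_ne_zero.mpr n.factorial_ne_zero
  rw [Nat.cast_choose ℚ hi]
  field_simp

lemma exp_map_mul (φ ψ : MvPowerSeries ℕ R) :
    ExpMap W (φ * ψ) = ExpMap W φ * ExpMap W ψ := by
  have hf := summable_expTerm W hlin hI hWcont hWI φ
  have hg := summable_expTerm W hlin hI hWcont hWI ψ
  have hfg := summable_mul_pair W hlin hI hWcont hWI φ ψ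
  have h := Summable.tsum_mul_tsum_eq_tsum_sum_antidiagonal hf hg hfg
  calc ExpMap W (φ * ψ)
      = ∑' n, ∑ kl ∈ Finset.HasAntidiagonal.antidiagonal n, expTerm W φ kl.1 * expTerm W ψ kl.2 := by
        rw [ExpMap]
        exact tsum_congr fun n =>
          (antidiagonal_exp_sum W hlin hI hWcont hWI φ ψ n).symm
    _ = ExpMap W φ * ExpMap W ψ := by
        rw [ExpMap, ExpMap]; exact h.symm

lemma scalar_alternating (k : ℕ) :
    (∑ p ∈ Finset.HasAntidiagonal.antidiagonal k,
        ((-1 : ℚ) ^ p.1 * ((p.1.factorial : ℚ))⁻¹ * ((p.2.factorial : ℚ))⁻¹))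
      = if k = 0 then ((1 : ℚ)) else 0 := by
  rw [Finset.Nat.sum_antidiagonal_eq_sum_range_succ_mk]
  have hterm : ∀ i ∈ Finset.range (k + 1),
      ((-1 : ℚ) ^ i * ((i.factorial : ℚ))⁻¹ * (((k - i).factorial : ℚ))⁻¹)
        = ((k.factorial : ℚ))⁻¹ * ((-1 : ℚ) ^ i * (k.choose i : ℚ)) := by
    intro i hi
    rw [Finset.mem_range, Nat.lt_succ_iff] at hi
    have ha : ((i.factorial : ℚ)) ≠ 0 := Nat.cast_ne_zero.mpr i.factorial_ne_zero
    have hb : (((k - i).factorial : ℚ)) ≠ 0 := Nat.cast_ne_zero.mpr (k - i).factorial_ne_zero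
    have hc : ((k.factorial : ℚ)) ≠ 0 := Nat.cast_ne_zero.mpr k.factorial_ne_zero
    rw [Nat.cast_choose ℚ hi]
    field_simp
  rw [Finset.sum_congr rfl hterm, ← Finset.mul_sum]
  have halt : (∑ i ∈ Finset.range (k + 1), ((-1 : ℚ) ^ i * (k.choose i : ℚ)))
      = if k = 0 then ((1 : ℚ)) else 0 := by
    exact_mod_cast Int.alternating_sum_range_choose (n := k)
  rw [halt]
  split
  · next hk => subst hk; simp
  · rw [mul_zero]

lemma exp_neg_exp (φ : MvPowerSeries ℕ R) :
    ExpMap (-W) (ExpMap W φ) = φ := by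
  have hWcont' : Continuous ⇑(-W) := by
    have h : ⇑(-W) = fun x => -(W x) := rfl
    rw [h]; exact hWcont.neg
  have hWI' : ∀ n e, coeff e ((-W) (X n)) ∈ I := by
    intro n e
    show coeff e (-(W (X n))) ∈ I
    rw [map_neg]
    exact neg_mem (hWI n e)
  set E1 := ExpMap W φ with hE1
  have hE := hasSum_exp W hlin hI hWcont hWI φ
  set c : ℕ → ℚ := fun i => ((-1 : ℚ) ^ i * ((i.factorial : ℚ))⁻¹) with hc
  have h3 : ∀ i, HasSum
      (fun j => (c i * ((j.factorial : ℚ))⁻¹) • (⇑W)^[i + j] φ) (c i • (⇑W)^[i] E1) := by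
    intro i
    have hiter : HasSum (fun j => (⇑W)^[i] (expTerm W φ j)) ((⇑W)^[i] E1) :=
      hE.map (iterHom W i) (iter_cont W hWcont i)
    have h4 := hiter.const_smul (c i)
    refine HasSum.congr_fun h4 fun j => ?_
    rw [expTerm, iter_qsmul, ← Function.iterate_add_apply, smul_smul]
  have hP : Summable (fun p : ℕ × ℕ =>
      (c p.1 * ((p.2.factorial : ℚ))⁻¹) • (⇑W)^[p.1 + p.2] φ) :=
    summable_qsmul_pair W hlin hI hWcont hWI _ φ
  obtain ⟨T, hT⟩ := hP
  have hfib : HasSum (fun i => c i • (⇑W)^[i] E1) T := hT.prod_fiberwise h3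
  have hE' : HasSum (expTerm (-W) E1) (ExpMap (-W) E1) :=
    hasSum_exp (-W) hlin hI hWcont' hWI' E1
  have heq : expTerm (-W) E1 = fun i => c i • (⇑W)^[i] E1 := by
    funext i
    rw [expTerm, neg_iter, smul_smul, hc]
    congr 1
    ring
  rw [heq] at hE'
  have hmain : ExpMap (-W) E1 = T := hE'.unique hfib
  -- now regroup over antidiagonals
  have hsigma : HasSum (fun k => ∑ p ∈ Finset.HasAntidiagonal.antidiagonal k,
      (c p.1 * ((p.2.factorial : ℚ))⁻¹) • (⇑W)^[p.1 + p.2] φ) T := by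
    have h5 := Finset.HasAntidiagonal.sigmaAntidiagonalEquivProd.hasSum_iff.mpr hT
    have h6 := h5.sigma (fun k => hasSum_fintype
      (fun p : (Finset.HasAntidiagonal.antidiagonal k : Finset (ℕ × ℕ)) =>
        (c (p : ℕ × ℕ).1 * ((((p : ℕ × ℕ).2).factorial : ℚ))⁻¹) • (⇑W)^[(p : ℕ × ℕ).1 + (p : ℕ × ℕ).2] φ))
    refine HasSum.congr_fun h6 fun k => ?_
    exact (Finset.sum_coe_sort _ _).symm
  have hfibval : (fun k => ∑ p ∈ Finset.HasAntidiagonal.antidiagonal k,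
      (c p.1 * ((p.2.factorial : ℚ))⁻¹) • (⇑W)^[p.1 + p.2] φ)
      = fun k => if k = 0 then φ else 0 := by
    funext k
    have h7 : ∀ p ∈ Finset.HasAntidiagonal.antidiagonal k,
        (c p.1 * ((p.2.factorial : ℚ))⁻¹) • (⇑W)^[p.1 + p.2] φ
          = (c p.1 * ((p.2.factorial : ℚ))⁻¹) • (⇑W)^[k] φ := by
      intro p hp
      rw [Finset.HasAntidiagonal.mem_antidiagonal] at hp
      rw [hp]
    rw [Finset.sum_congr rfl h7, ← Finset.sum_smul]
    have h8 : (∑ p ∈ Finset.HasAntidiagonal.antidiagonal k, (c p.1 * ((p.2.factorial : ℚ))⁻¹))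
        = if k = 0 then ((1 : ℚ)) else 0 := by
      rw [← scalar_alternating W hlin hI hWcont hWI k]
    rw [h8]
    split
    · next hk => subst hk; simp
    · rw [zero_smul]
  rw [hfibval] at hsigma
  have h9 : HasSum (fun k : ℕ => if k = 0 then φ else 0) φ := hasSum_ite_eq 0 φ
  rw [hmain]
  exact hsigma.unique h9


lemma coeff_exp_hasSum (φ : MvPowerSeries ℕ R) (d : ℕ →₀ ℕ) :
    HasSum (fun k => coeff d (expTerm W φ k)) (coeff d (ExpMap W φ)) :=
  (hasSum_exp W hlin hI hWcont hWI φ).map (coeff d).toAddMonoidHom (contCoeff d)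

lemma coeff_exp_decomp (φ : MvPowerSeries ℕ R) (d : ℕ →₀ ℕ) (n : ℕ) :
    coeff d (ExpMap W φ)
      = (∑ k ∈ Finset.range n, coeff d (expTerm W φ k))
        + ∑' j, coeff d (expTerm W φ (j + n)) := by
  have hco := coeff_exp_hasSum W hlin hI hWcont hWI φ d
  rw [← hco.tsum_eq]
  exact (Summable.sum_add_tsum_nat_add n hco.summable).symm

set_option maxHeartbeats 1000000 in
lemma tail_mem (φ : MvPowerSeries ℕ R) (d : ℕ →₀ ℕ) {J' : Ideal R}
    (hJ'c : IsClosed (J' : Set R)) {n : ℕ} (hIJ : ∀ k ≥ n, (Icl I k : Set R) ⊆ J') :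
    (∑' j, coeff d (expTerm W φ (j + n))) ∈ J' := by
  have hco := coeff_exp_hasSum W hlin hI hWcont hWI φ d
  have hsum : Summable (fun j => coeff d (expTerm W φ (j + n))) :=
    (summable_nat_add_iff n).mpr hco.summable
  have ht := hsum.hasSum
  refine hJ'c.mem_of_tendsto ht (Eventually.of_forall fun s => ?_)
  refine Ideal.sum_mem _ fun j _ => ?_
  exact hIJ (j + n) (Nat.le_add_left n j) (coeff_expTerm_mem W hWcont hWI φ (j + n) d)

set_option maxHeartbeats 1000000 in
lemma exp_cont : Continuous (ExpMap W) := by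
  have hca : ContinuousAt (ExpMap W) 0 := by
    rw [ContinuousAt, exp_map_zero W]
    rw [tendsto_def]
    intro S hS
    obtain ⟨F, U, hU, hFU⟩ := nhds_zero_basis' S hS
    obtain ⟨J0, hJ0U, hJ0n⟩ := hlin U hU
    obtain ⟨Wh, hWh, hWhadd⟩ := exists_nhds_zero_half hJ0n
    obtain ⟨J', hJ'W, hJ'n⟩ := hlin Wh hWh
    have hJ'c := idealClosed J' hJ'n
    obtain ⟨n, hn⟩ := hI _ hJ'n
    have hIJ : ∀ k ≥ n, (Icl I k : Set R) ⊆ J' := fun k hk =>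
      Icl_subset_of_pow_subset hJ'n hn hk
    set head : (ℕ →₀ ℕ) → MvPowerSeries ℕ R → R :=
      fun d φ => ∑ k ∈ Finset.range n, coeff d (expTerm W φ k) with hhead
    have hcont : ∀ d, Continuous (head d) := by
      intro d
      refine continuous_finset_sum _ fun k _ => ?_
      have h1 : (fun φ => coeff d (expTerm W φ k))
          = fun φ => ((k.factorial : ℚ))⁻¹ • coeff d ((⇑W)^[k] φ) := by
        funext φ
        rw [expTerm, coeff_qsmul]
      rw [h1]
      exact (contQSmulR _).comp ((contCoeff d).comp (iter_cont W hWcont k))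
    have h0 : ∀ d, head d 0 = 0 := by
      intro d
      refine Finset.sum_eq_zero fun k _ => ?_
      rw [exp_term_zero, map_zero]
    have hT : (⋂ d ∈ F, (head d) ⁻¹' Wh) ∈ nhds (0 : MvPowerSeries ℕ R) := by
      refine (Filter.biInter_finset_mem _).mpr fun d _ => ?_
      exact ((hcont d).tendsto' 0 0 (h0 d)) hWh
    refine Filter.mem_of_superset hT ?_
    intro φ hφ
    refine hFU fun d hd => ?_
    have hφd : head d φ ∈ Wh := Set.mem_iInter₂.mp hφ d hd
    have htail : (∑' j, coeff d (expTerm W φ (j + n))) ∈ J' :=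
      tail_mem W hlin hI hWcont hWI φ d hJ'c hIJ
    have hdecomp := coeff_exp_decomp W hlin hI hWcont hWI φ d n
    rw [hdecomp]
    exact hJ0U (hWhadd _ hφd _ (hJ'W htail))
  have hEhom : Continuous ⇑(AddMonoidHom.mk' (ExpMap W)
      (fun a b => exp_map_add W hlin hI hWcont hWI a b)) :=
    continuous_of_continuousAt_zero _ hca
  exact hEhom

/-- The exponential as a ring homomorphism. -/
noncomputable def ExpHom : MvPowerSeries ℕ R →+* MvPowerSeries ℕ R where
  toFun := ExpMap W
  map_one' := exp_map_one W hlin hI hWcont hWI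
  map_mul' := exp_map_mul W hlin hI hWcont hWI
  map_zero' := exp_map_zero W
  map_add' := exp_map_add W hlin hI hWcont hWI

end WithHyp

lemma iterate_tendsto_uniform (hlin : LinearlyTopologized R)
    (hI : ∀ S ∈ nhds (0 : R), ∃ n : ℕ, ((I ^ n : Ideal R) : Set R) ⊆ S)
    (hWcont : Continuous W) (hWI : ∀ n e, coeff e (W (X n)) ∈ I) :
    ∀ S ∈ nhds (0 : MvPowerSeries ℕ R), ∃ K : ℕ, ∀ k ≥ K,
      ∀ φ : MvPowerSeries ℕ R, (⇑W)^[k] φ ∈ S := by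
  intro S hS
  obtain ⟨F, U, hU, hFU⟩ := nhds_zero_basis' S hS
  obtain ⟨J, hJU, hJn⟩ := hlin U hU
  obtain ⟨n, hn⟩ := hI _ hJn
  refine ⟨n, fun k hk φ => ?_⟩
  refine hFU fun d _ => ?_
  exact hJU (Icl_subset_of_pow_subset hJn hn hk (coeff_iterate_mem W hWcont hWI k φ d))

end Aux

/-- time-one flow.  With `R`, `x`, `V` as in the formal flow theorem,
let `I ⊆ R` be an ideal such that every neighbourhood of `0` contains some power
`I^n`.  If all coefficients of the components `V(x_n)` lie in `I`, then
`V^k(φ) → 0` uniformly in `φ`, the substitution `t = 1` in `exp(tV)φ` converges,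
and it yields a well-defined time-one flow automorphism of `Spf R[[x]]` (a continuous
ring automorphism with continuous inverse). -/
theorem formal_time_one_flow
    (R : Type*) [CommRing R] [Algebra ℚ R] [UniformSpace R] [IsUniformAddGroup R]
    [CompleteSpace R] [T2Space R] [IsTopologicalRing R]
    (hlin : LinearlyTopologized R)
    (I : Ideal R)
    (hI : ∀ S ∈ nhds (0 : R), ∃ n : ℕ, ((I ^ n : Ideal R) : Set R) ⊆ S)
    (V : Derivation R (MvPowerSeries ℕ R) (MvPowerSeries ℕ R))
    (hVcont : Continuous V)
    (hVtend : Tendsto (fun n => V (MvPowerSeries.X n)) atTop (nhds 0))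
    (hVI : ∀ n : ℕ, ∀ d : ℕ →₀ ℕ, MvPowerSeries.coeff d (V (MvPowerSeries.X n)) ∈ I) :
    (∀ S ∈ nhds (0 : MvPowerSeries ℕ R), ∃ K : ℕ, ∀ k ≥ K,
        ∀ φ : MvPowerSeries ℕ R, (⇑V)^[k] φ ∈ S) ∧
    ∃ E E' : MvPowerSeries ℕ R →+* MvPowerSeries ℕ R,
      Continuous E ∧ Continuous E' ∧
      (∀ φ, HasSum (fun k : ℕ => ((k.factorial : ℚ)⁻¹) • (⇑V)^[k] φ) (E φ)) ∧
      E'.comp E = RingHom.id (MvPowerSeries ℕ R) ∧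
      E.comp E' = RingHom.id (MvPowerSeries ℕ R) := by
  have hVcont' : Continuous ⇑(-V) := by
    have h : ⇑(-V) = fun x => -(V x) := rfl
    rw [h]; exact hVcont.neg
  have hVI' : ∀ n e, MvPowerSeries.coeff e ((-V) (MvPowerSeries.X n)) ∈ I := by
    intro n e
    show MvPowerSeries.coeff e (-(V (MvPowerSeries.X n))) ∈ I
    rw [map_neg]
    exact neg_mem (hVI n e)
  refine ⟨iterate_tendsto_uniform V hlin hI hVcont hVI, ?_⟩
  refine ⟨ExpHom V hlin hI hVcont hVI, ExpHom (-V) hlin hI hVcont' hVI', ?_, ?_, ?_, ?_, ?_⟩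
  · exact exp_cont V hlin hI hVcont hVI
  · exact exp_cont (-V) hlin hI hVcont' hVI'
  · intro φ
    exact hasSum_exp V hlin hI hVcont hVI φ
  · refine RingHom.ext fun φ => ?_
    show ExpMap (-V) (ExpMap V φ) = φ
    exact exp_neg_exp V hlin hI hVcont hVI φ
  · refine RingHom.ext fun φ => ?_
    show ExpMap V (ExpMap (-V) φ) = φ
    have h := exp_neg_exp (-V) hlin hI hVcont' hVI' φ
    rwa [neg_neg] at h
end

section
/- Let M = Eff + (ℤ_{≥0})^m be the sub-semigroup of ℤ^m generated by an effective cone Eff ⊆ L ⊆ ℤ^m and the standard basis, and let R{M} denote the completion of the semigroup ring R[M] with respect to the ideal generated by Q^d, d ∈ Eff \ {0}. Choose a maximal smooth cone σ_{I_0} of Σ, giving a splitting ς : N → ℤ^m of the fan sequence with ς(b_i) = e_i for i ∈ I_0. Then the assignment w_j ↦ Q^{e_j − ς(b_j)} x^{b_j} defines an injective R[Q]-algebra homomorphism from ℂ[M] into ℂ[Q] ⊗ ℂ[N ∩ |Σ|], and e_j − ς(b_j) lies in Eff for each j. -/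
open Finset
open scoped Classical

/-- The map `ℤ^m → N`, `e_j ↦ b_j` (third arrow of the fan sequence). -/
def SmoothFan.toN {D m : ℕ} (F : SmoothFan D m) (v : Fin m → ℤ) : Fin D → ℤ :=
  ∑ j, v j • F.b j

/-- The set of effective curve classes `L ∩ Σ_{σ_I ∈ Σ} C_I`, where
`C_I = {d ∈ L ⊗ ℚ : d_i ≥ 0 for i ∉ I}`. -/
def SmoothFan.EffSet {D m : ℕ} (F : SmoothFan D m) : Set (Fin m → ℤ) :=
  {v | F.toN v = 0 ∧
    ∃ f : Finset (Fin m) → (Fin m → ℚ),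
      ((fun i => (v i : ℚ)) = ∑ I ∈ F.cones, f I) ∧
      ∀ I ∈ F.cones,
        ((∑ j, f I j • (fun t => (F.b j t : ℚ))) = 0) ∧ (∀ i ∉ I, 0 ≤ f I i)}

/-- `Eff(X_Σ)` as an additive submonoid (the semigroup generated by effective classes). -/
def SmoothFan.EffM {D m : ℕ} (F : SmoothFan D m) : AddSubmonoid (Fin m → ℤ) :=
  AddSubmonoid.closure F.EffSet

/-- `(ℤ_{≥0})^m` as a submonoid of `ℤ^m`. -/
def nonnegM (m : ℕ) : AddSubmonoid (Fin m → ℤ) where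
  carrier := {a | ∀ i, 0 ≤ a i}
  zero_mem' := fun _ => le_rfl
  add_mem' := fun ha hb i => add_nonneg (ha i) (hb i)

/-- The semigroup `M = Eff(X_Σ) + (ℤ_{≥0})^m ⊆ ℤ^m`. -/
def SmoothFan.Mmon {D m : ℕ} (F : SmoothFan D m) : AddSubmonoid (Fin m → ℤ) :=
  F.EffM ⊔ nonnegM m

/-- The semigroup `N ∩ |Σ|` of lattice points of the (convex) support. -/
def SmoothFan.SuppM {D m : ℕ} (F : SmoothFan D m) : AddSubmonoid (Fin D → ℤ) :=
  AddSubmonoid.closure {k | F.InSupport k}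

/-- `β(k) = Ψ(k) − ς(k)`, for a splitting `ς` of the fan sequence. -/
noncomputable def SmoothFan.beta {D m : ℕ} (F : SmoothFan D m)
    (ς : (Fin D → ℤ) →+ (Fin m → ℤ)) (k : Fin D → ℤ) : Fin m → ℤ :=
  (fun i => (F.Psi k i : ℤ)) - ς k

/-- `F.toN` as an additive monoid homomorphism. -/
def SmoothFan.pih {D m : ℕ} (F : SmoothFan D m) : (Fin m → ℤ) →+ (Fin D → ℤ) where
  toFun := F.toN
  map_zero' := by simp [SmoothFan.toN]
  map_add' v w := by
    simp [SmoothFan.toN, add_smul, Finset.sum_add_distrib]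

lemma SmoothFan.toN_single {D m : ℕ} (F : SmoothFan D m) (j : Fin m) :
    F.toN (Pi.single j (1 : ℤ)) = F.b j := by
  unfold SmoothFan.toN
  rw [Finset.sum_eq_single j]
  · simp
  · intro i _ hij
    rw [Pi.single_eq_of_ne hij, zero_smul]
  · intro h; exact absurd (Finset.mem_univ j) h

lemma pi_decomp {m : ℕ} (v : Fin m → ℤ) :
    v = ∑ j, v j • Pi.single j (1 : ℤ) := by
  funext t
  rw [Finset.sum_apply]
  simp [Pi.single_apply, mul_ite, Finset.sum_ite_eq]

/-- The section `ς` is supported on `I₀`. -/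
lemma sigma_supported {D m : ℕ} (F : SmoothFan D m)
    (I₀ : Finset (Fin m)) (hI₀ : I₀ ∈ F.cones) (hcard : I₀.card = D)
    (ς : (Fin D → ℤ) →+ (Fin m → ℤ))
    (hς : ∀ i ∈ I₀, ς (F.b i) = Pi.single i 1) :
    ∀ v : Fin D → ℤ, ∀ j ∉ I₀, ς v j = 0 := by
  intro v j hj
  by_cases hE : I₀ = ∅
  · have hD0 : D = 0 := by rw [← hcard, hE, Finset.card_empty]
    subst hD0
    have hv : v = 0 := funext fun i => i.elim0
    rw [hv, map_zero]; rfl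
  · haveI : Nonempty {x // x ∈ I₀} := by
      obtain ⟨i, hi⟩ := Finset.nonempty_iff_ne_empty.2 hE
      exact ⟨⟨i, hi⟩⟩
    have hli := F.smooth I₀ hI₀
    have hcard' : Fintype.card {x // x ∈ I₀} = Module.finrank ℚ (Fin D → ℚ) := by
      rw [Fintype.card_coe, hcard, Module.finrank_pi]
      simp
    have hspan := hli.span_eq_top_of_card_eq_finrank hcard'
    have hmem : (fun t => (v t : ℚ)) ∈ Submodule.span ℚ
        (Set.range fun i : {x // x ∈ I₀} => fun t => (F.b i.1 t : ℚ)) := by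
      rw [hspan]; trivial
    rw [Submodule.mem_span_range_iff_exists_fun] at hmem
    obtain ⟨q, hq⟩ := hmem
    obtain ⟨n, hn⟩ := IsLocalization.exist_integer_multiples_of_finite
      (nonZeroDivisors ℤ) q
    choose z hz using hn
    have hz' : ∀ i, (z i : ℚ) = ((n : ℤ) : ℚ) * q i := by
      intro i
      have := hz i
      rw [zsmul_eq_mul] at this
      rw [← this]
      simp [algebraMap_int_eq]
    have key : (n : ℤ) • v = ∑ i : {x // x ∈ I₀}, z i • F.b i.1 := by
      funext t
      have ht := congrFun hq t
      rw [Finset.sum_apply] at ht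
      refine Int.cast_injective (α := ℚ) ?_
      rw [Pi.smul_apply, smul_eq_mul, Finset.sum_apply]
      simp only [Pi.smul_apply, smul_eq_mul]
      push_cast
      calc ((n : ℤ) : ℚ) * (v t : ℚ)
          = ((n : ℤ) : ℚ) * ∑ i : {x // x ∈ I₀}, q i * (F.b i.1 t : ℚ) := by
            rw [← ht]; rfl
        _ = ∑ i : {x // x ∈ I₀}, (z i : ℚ) * (F.b i.1 t : ℚ) := by
            rw [Finset.mul_sum]
            refine Finset.sum_congr rfl fun i _ => ?_
            rw [hz' i]; ring
    have h2 : (n : ℤ) • ς v = ∑ i : {x // x ∈ I₀}, z i • (Pi.single i.1 1 : Fin m → ℤ) := by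
      rw [← AddMonoidHom.map_zsmul, key, map_sum]
      refine Finset.sum_congr rfl fun i _ => ?_
      rw [AddMonoidHom.map_zsmul, hς i.1 i.2]
    have h3 := congrFun h2 j
    rw [Finset.sum_apply] at h3
    have h4 : ∑ i : {x // x ∈ I₀}, (z i • (Pi.single i.1 1 : Fin m → ℤ)) j = 0 := by
      refine Finset.sum_eq_zero fun i _ => ?_
      have hij : j ≠ i.1 := fun h => hj (h ▸ i.2)
      simp [Pi.single_eq_of_ne hij]
    rw [h4] at h3
    have hn0 : (n : ℤ) ≠ 0 := nonZeroDivisors.coe_ne_zero n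
    have : (n : ℤ) * ς v j = 0 := h3
    exact (mul_eq_zero.1 this).resolve_left hn0

/-- Each `e_j − ς(b_j)` is an effective class. -/
lemma dj_mem_EffSet {D m : ℕ} (F : SmoothFan D m)
    (I₀ : Finset (Fin m)) (hI₀ : I₀ ∈ F.cones) (hcard : I₀.card = D)
    (ς : (Fin D → ℤ) →+ (Fin m → ℤ))
    (hsec : ∀ v : Fin D → ℤ, F.toN (ς v) = v)
    (hς : ∀ i ∈ I₀, ς (F.b i) = Pi.single i 1) :
    ∀ j : Fin m, Pi.single j 1 - ς (F.b j) ∈ F.EffSet := by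
  intro j
  have htoN : F.toN (Pi.single j 1 - ς (F.b j)) = 0 := by
    have := F.pih.map_sub (Pi.single j 1) (ς (F.b j))
    have h1 : F.pih (Pi.single j 1 - ς (F.b j))
        = F.toN (Pi.single j (1:ℤ)) - F.toN (ς (F.b j)) := this
    show F.pih (Pi.single j 1 - ς (F.b j)) = 0
    rw [h1, F.toN_single, hsec, sub_self]
  refine ⟨htoN, fun I => if I = I₀ then (fun i => (((Pi.single j 1 - ς (F.b j) : Fin m → ℤ)) i : ℚ)) else 0,
    ?_, ?_⟩
  · rw [Finset.sum_ite_eq' F.cones I₀, if_pos hI₀]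
  · intro I hI
    by_cases hI' : I = I₀
    · subst hI'
      beta_reduce
      rw [if_pos rfl]
      constructor
      · funext t
        have h0 := congrFun htoN t
        unfold SmoothFan.toN at h0
        rw [Finset.sum_apply] at h0
        simp only [Pi.smul_apply, smul_eq_mul, Pi.zero_apply] at h0
        rw [Finset.sum_apply]
        simp only [Pi.smul_apply, smul_eq_mul, Pi.zero_apply]
        exact_mod_cast congrArg (Int.cast : ℤ → ℚ) h0
      · intro i hi
        have hzero : ς (F.b j) i = 0 := sigma_supported F I hI₀ hcard ς hς (F.b j) i hi
        simp only [Pi.sub_apply, hzero, sub_zero]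
        rw [Pi.single_apply]
        split <;> norm_num
    · beta_reduce
      rw [if_neg hI']
      exact ⟨by simp, fun i _ => le_rfl⟩

lemma toN_mem_SuppM {D m : ℕ} (F : SmoothFan D m) :
    ∀ v ∈ F.Mmon, F.toN v ∈ F.SuppM := by
  have hle : F.Mmon ≤ (F.SuppM).comap F.pih := by
    rw [SmoothFan.Mmon, sup_le_iff]
    constructor
    · rw [SmoothFan.EffM]
      rw [AddSubmonoid.closure_le]
      intro v hv
      have h0 : F.pih v = 0 := hv.1
      simp only [SetLike.mem_coe, AddSubmonoid.mem_comap, h0]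
      exact zero_mem _
    · intro v hv
      rw [AddSubmonoid.mem_comap]
      show F.toN v ∈ F.SuppM
      unfold SmoothFan.toN
      refine AddSubmonoid.sum_mem _ fun j _ => ?_
      refine AddSubmonoid.subset_closure ?_
      refine ⟨{j}, F.ray_mem j, Pi.single j (v j).toNat, ?_, ?_⟩
      · intro i hi
        by_contra hij
        rw [Finset.mem_singleton] at hij
        exact hi (Pi.single_eq_of_ne hij _)
      · rw [Finset.sum_eq_single j]
        · rw [Pi.single_eq_same, Int.toNat_of_nonneg (hv j)]
        · intro i _ hij
          rw [Pi.single_eq_of_ne hij]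
          simp
        · intro h; exact absurd (Finset.mem_univ j) h
  exact fun v hv => hle hv

/-- `v ↦ v − ς(π(v))` as an additive monoid homomorphism. -/
def rhoh {D m : ℕ} (F : SmoothFan D m) (ς : (Fin D → ℤ) →+ (Fin m → ℤ)) :
    (Fin m → ℤ) →+ (Fin m → ℤ) where
  toFun v := v - ς (F.toN v)
  map_zero' := by
    show (0 : Fin m → ℤ) - ς (F.toN 0) = 0
    have h : F.toN (0 : Fin m → ℤ) = 0 := F.pih.map_zero
    rw [h, map_zero, sub_zero]
  map_add' v w := by
    show (v + w) - ς (F.toN (v + w)) = (v - ς (F.toN v)) + (w - ς (F.toN w))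
    have h : F.toN (v + w) = F.toN v + F.toN w := F.pih.map_add v w
    rw [h, map_add]
    abel

lemma rho_mem_EffM {D m : ℕ} (F : SmoothFan D m)
    (I₀ : Finset (Fin m)) (hI₀ : I₀ ∈ F.cones) (hcard : I₀.card = D)
    (ς : (Fin D → ℤ) →+ (Fin m → ℤ))
    (hsec : ∀ v : Fin D → ℤ, F.toN (ς v) = v)
    (hς : ∀ i ∈ I₀, ς (F.b i) = Pi.single i 1) :
    ∀ v ∈ F.Mmon, v - ς (F.toN v) ∈ F.EffM := by
  have hle : F.Mmon ≤ (F.EffM).comap (rhoh F ς) := by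
    rw [SmoothFan.Mmon, sup_le_iff]
    constructor
    · conv_lhs => rw [SmoothFan.EffM]
      rw [AddSubmonoid.closure_le]
      intro v hv
      simp only [SetLike.mem_coe, AddSubmonoid.mem_comap]
      show v - ς (F.toN v) ∈ F.EffM
      rw [hv.1, map_zero, sub_zero]
      exact AddSubmonoid.subset_closure hv
    · intro v hv
      rw [AddSubmonoid.mem_comap]
      have hdecomp : (rhoh F ς) v = ∑ j, v j • (rhoh F ς) (Pi.single j (1:ℤ)) := by
        conv_lhs => rw [pi_decomp v]
        rw [map_sum]
        exact Finset.sum_congr rfl fun j _ => (AddMonoidHom.map_zsmul _ _ _)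
      rw [hdecomp]
      refine AddSubmonoid.sum_mem _ fun j _ => ?_
      have hmem : (rhoh F ς) (Pi.single j (1:ℤ)) ∈ F.EffM := by
        show Pi.single j 1 - ς (F.toN (Pi.single j 1)) ∈ F.EffM
        rw [F.toN_single]
        exact AddSubmonoid.subset_closure (dj_mem_EffSet F I₀ hI₀ hcard ς hsec hς j)
      rw [← Int.toNat_of_nonneg (hv j), natCast_zsmul]
      exact nsmul_mem hmem _
  exact fun v hv => hle hv

/-- for a splitting `ς : N → ℤ^m` of the fan sequence determined by a
maximal cone `σ_{I₀}` (`ς(b_i) = e_i` for `i ∈ I₀`), each `e_j − ς(b_j)` lies in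
`Eff`, and the assignment `w_j ↦ Q^{e_j − ς(b_j)} x^{b_j}` (i.e. on the semigroup,
`v ↦ (v − ς(π(v)), π(v))`) defines an injective `ℂ[Q]`-algebra homomorphism
`ℂ[M] → ℂ[Q] ⊗ ℂ[N ∩ |Σ|] = ℂ[Eff × (N ∩ |Σ|)]`. -/
theorem semigroup_ring_embedding {D m : ℕ} (F : SmoothFan D m)
    (I₀ : Finset (Fin m)) (hI₀ : I₀ ∈ F.cones) (hcard : I₀.card = D)
    (ς : (Fin D → ℤ) →+ (Fin m → ℤ))
    (hsec : ∀ v : Fin D → ℤ, F.toN (ς v) = v)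
    (hς : ∀ i ∈ I₀, ς (F.b i) = Pi.single i 1) :
    (∀ j : Fin m, Pi.single j 1 - ς (F.b j) ∈ F.EffM) ∧
    ∃ f : AddMonoidAlgebra ℂ ↥F.Mmon →ₐ[ℂ] AddMonoidAlgebra ℂ (↥F.EffM × ↥F.SuppM),
      Function.Injective f ∧
      ∀ v : ↥F.Mmon,
        ∃ (h1 : (v : Fin m → ℤ) - ς (F.toN (v : Fin m → ℤ)) ∈ F.EffM)
          (h2 : F.toN (v : Fin m → ℤ) ∈ F.SuppM),
          f (AddMonoidAlgebra.single v (1 : ℂ)) =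
            AddMonoidAlgebra.single ((⟨_, h1⟩, ⟨_, h2⟩) : ↥F.EffM × ↥F.SuppM) (1 : ℂ) := by
  have heff := rho_mem_EffM F I₀ hI₀ hcard ς hsec hς
  have hsupp := toN_mem_SuppM F
  constructor
  · exact fun j => AddSubmonoid.subset_closure (dj_mem_EffSet F I₀ hI₀ hcard ς hsec hς j)
  · set φ1 : ↥F.Mmon →+ ↥F.EffM :=
      AddMonoidHom.codRestrict ((rhoh F ς).comp F.Mmon.subtype) F.EffM
        (fun v => heff v.1 v.2) with hφ1
    set φ2 : ↥F.Mmon →+ ↥F.SuppM :=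
      AddMonoidHom.codRestrict (F.pih.comp F.Mmon.subtype) F.SuppM
        (fun v => hsupp v.1 v.2) with hφ2
    set φ : ↥F.Mmon →+ (↥F.EffM × ↥F.SuppM) := φ1.prod φ2 with hφ
    have hφinj : Function.Injective φ := by
      intro a b h
      have h1 : (a : Fin m → ℤ) - ς (F.toN a) = (b : Fin m → ℤ) - ς (F.toN b) :=
        congrArg (fun p => (p.1 : Fin m → ℤ)) h
      have h2 : F.toN (a : Fin m → ℤ) = F.toN (b : Fin m → ℤ) :=
        congrArg (fun p => (p.2 : Fin D → ℤ)) h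
      apply Subtype.ext
      have : (a : Fin m → ℤ) - ς (F.toN a) + ς (F.toN a)
          = (b : Fin m → ℤ) - ς (F.toN b) + ς (F.toN b) := by rw [h1, h2]
      simpa using this
    refine ⟨AddMonoidAlgebra.mapDomainAlgHom ℂ ℂ φ, ?_, ?_⟩
    · intro x y hxy
      exact AddMonoidAlgebra.mapDomain_injective hφinj hxy
    · intro v
      refine ⟨heff v.1 v.2, hsupp v.1 v.2, ?_⟩
      show AddMonoidAlgebra.mapDomain φ (AddMonoidAlgebra.single v (1 : ℂ)) = _
      rw [AddMonoidAlgebra.mapDomain_single]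
      rfl
end

section
/- With the splitting ς: N → ℤ^m and β(k) := Ψ(k) − ς(k), one has β(k) ∈ Eff for every k ∈ N ∩ |Σ|, and the set { w^{Ψ(k)} := Q^{β(k)} x^k : k ∈ N ∩ |Σ| } is a topological ℂ[[Q]]-basis of the completed semigroup ring ℂ{M}, i.e. ℂ{M} = (⊕_{k ∈ N∩|Σ|} ℂ·w^{Ψ(k)})[[Q]]. -/
open Finset
open scoped Classical

namespace SmoothFan

variable {D m : ℕ} (F : SmoothFan D m)

lemma toN_add' (a b : Fin m → ℤ) : F.toN (a + b) = F.toN a + F.toN b := by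
  simp [SmoothFan.toN, add_smul, Finset.sum_add_distrib]

lemma toN_sub' (a b : Fin m → ℤ) : F.toN (a - b) = F.toN a - F.toN b := by
  simp [SmoothFan.toN, sub_smul, Finset.sum_sub_distrib]

lemma toN_zero' : F.toN 0 = 0 := by simp [SmoothFan.toN]

lemma toN_eff {e : Fin m → ℤ} (he : e ∈ F.EffM) : F.toN e = 0 := by
  induction he using AddSubmonoid.closure_induction with
  | mem x hx => exact hx.1
  | zero => exact F.toN_zero'
  | add x y _ _ hx hy => rw [F.toN_add', hx, hy, add_zero]

lemma psi_spec (k : Fin D → ℤ) (hk : F.InSupport k) :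
    (∃ I ∈ F.cones, ∀ i, F.Psi k i ≠ 0 → i ∈ I) ∧
      k = ∑ i, (F.Psi k i : ℤ) • F.b i := by
  obtain ⟨I, hI, c, hc, hke⟩ := hk
  have h : ∃ c : Fin m → ℕ, (∃ I ∈ F.cones, ∀ i, c i ≠ 0 → i ∈ I) ∧
      k = ∑ i, (c i : ℤ) • F.b i := ⟨c, ⟨I, hI, hc⟩, hke⟩
  rw [SmoothFan.Psi, dif_pos h]
  exact ⟨h.choose_spec.1, h.choose_spec.2⟩

lemma toN_psi (k : Fin D → ℤ) (hk : F.InSupport k) :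
    F.toN (fun i => (F.Psi k i : ℤ)) = k := by
  rw [SmoothFan.toN]; exact (F.psi_spec k hk).2.symm

lemma inSupport_zero : F.InSupport 0 :=
  ⟨∅, F.empty_mem, 0, by simp, by simp⟩

lemma inSupport_add {k l : Fin D → ℤ} (hk : F.InSupport k) (hl : F.InSupport l) :
    F.InSupport (k + l) := F.convex k l hk hl

lemma inSupport_ray (j : Fin m) (c : ℕ) : F.InSupport ((c : ℤ) • F.b j) := by
  refine ⟨{j}, F.ray_mem j, Pi.single j c, ?_, ?_⟩
  · intro i hi
    rw [Finset.mem_singleton]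
    by_contra hij
    apply hi
    simp [Pi.single_apply, hij]
  · rw [Finset.sum_eq_single j]
    · simp
    · intro i _ hij; simp [Pi.single_eq_of_ne hij]
    · intro h; exact absurd (Finset.mem_univ j) h

lemma inSupport_toN_nonneg (n : Fin m → ℤ) (hn : ∀ i, 0 ≤ n i) :
    F.InSupport (F.toN n) := by
  rw [SmoothFan.toN]
  refine Finset.sum_induction _ F.InSupport (fun a b ha hb => F.inSupport_add ha hb)
    F.inSupport_zero ?_
  intro j _
  have := F.inSupport_ray j (n j).toNat
  rwa [Int.toNat_of_nonneg (hn j)] at this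

lemma mem_effSet (dv : Fin m → ℤ) (I : Finset (Fin m)) (hI : I ∈ F.cones)
    (h0 : F.toN dv = 0) (hge : ∀ i ∉ I, 0 ≤ dv i) : dv ∈ F.EffSet := by
  refine ⟨h0, fun J => if J = I then (fun i => (dv i : ℚ)) else 0, ?_, ?_⟩
  · rw [Finset.sum_ite_eq' F.cones I (fun _ => (fun i => (dv i : ℚ))), if_pos hI]
  · intro J hJ
    by_cases hJI : J = I
    · subst hJI
      have hfJ : (fun J' => if J' = J then (fun i => (dv i : ℚ)) else 0) J
          = fun i => (dv i : ℚ) := by simp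
      refine ⟨?_, ?_⟩
      · rw [hfJ]
        funext t
        have h0t : (∑ j, dv j • F.b j) t = (0 : Fin D → ℤ) t := by
          rw [← SmoothFan.toN, h0]
        rw [Finset.sum_apply] at h0t
        simp only [Pi.smul_apply, smul_eq_mul, Pi.zero_apply] at h0t
        rw [Finset.sum_apply]
        simp only [Pi.smul_apply, smul_eq_mul, Pi.zero_apply]
        exact_mod_cast h0t
      · intro i hi
        rw [hfJ]
        show (0 : ℚ) ≤ (dv i : ℚ)
        exact_mod_cast hge i hi
    · simp [hJI]

lemma beta_apply (ς : (Fin D → ℤ) →+ (Fin m → ℤ)) (k : Fin D → ℤ) (i : Fin m) :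
    F.beta ς k i = (F.Psi k i : ℤ) - ς k i := rfl

lemma sigma_apply_eq_zero (I₀ : Finset (Fin m)) (hI₀ : I₀ ∈ F.cones)
    (hcard : I₀.card = D) (ς : (Fin D → ℤ) →+ (Fin m → ℤ))
    (hς : ∀ i ∈ I₀, ς (F.b i) = Pi.single i 1) (v : Fin D → ℤ)
    {i : Fin m} (hi : i ∉ I₀) : ς v i = 0 := by
  have hspan : Submodule.span ℚ
      (Set.range (fun x : {x // x ∈ I₀} => fun j => (F.b x.1 j : ℚ))) = ⊤ := by
    apply (F.smooth I₀ hI₀).span_eq_top_of_card_eq_finrank'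
    simp [hcard, Module.finrank_pi]
  have hv : (fun j => (v j : ℚ)) ∈ Submodule.span ℚ
      (Set.range (fun x : {x // x ∈ I₀} => fun j => (F.b x.1 j : ℚ))) := by
    rw [hspan]; trivial
  rw [Submodule.mem_span_range_iff_exists_fun] at hv
  obtain ⟨c, hc⟩ := hv
  set n : ℕ := ∏ x : {x // x ∈ I₀}, (c x).den with hn
  have hnpos : 0 < n := Finset.prod_pos (fun x _ => (c x).pos)
  have hint : ∀ x : {x // x ∈ I₀}, ∃ a : ℤ, (a : ℚ) = (n : ℚ) * c x := by
    intro x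
    have hdvd : (c x).den ∣ n := Finset.dvd_prod_of_mem _ (Finset.mem_univ x)
    obtain ⟨t, ht⟩ := hdvd
    refine ⟨(c x).num * t, ?_⟩
    have hden : ((c x).den : ℚ) ≠ 0 := by
      exact_mod_cast (c x).den_nz
    have key : ((c x).den : ℚ) * c x = ((c x).num : ℚ) := by
      have h1 := Rat.num_div_den (c x)
      rw [div_eq_iff hden] at h1
      rw [mul_comm]; exact h1.symm
    rw [ht]
    push_cast
    rw [mul_assoc, mul_comm ((t : ℚ)) (c x), ← mul_assoc, key, mul_comm]
  choose a ha using hint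
  have hmain : (n : ℤ) • v = ∑ x : {x // x ∈ I₀}, a x • F.b x.1 := by
    funext j
    have hcj : ∑ x : {x // x ∈ I₀}, c x * (F.b x.1 j : ℚ) = (v j : ℚ) := by
      have h := congrFun hc j
      rw [Finset.sum_apply] at h
      simpa [smul_eq_mul] using h
    have hq : ((n : ℤ) : ℚ) * (v j : ℚ) = ∑ x : {x // x ∈ I₀}, (a x : ℚ) * (F.b x.1 j : ℚ) := by
      rw [← hcj, Finset.mul_sum]
      refine Finset.sum_congr rfl (fun x _ => ?_)
      rw [ha x]; push_cast; ring
    have : ((n : ℤ) * v j : ℤ) = (∑ x : {x // x ∈ I₀}, a x * F.b x.1 j : ℤ) := by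
      exact_mod_cast hq
    simpa [Finset.sum_apply, smul_eq_mul] using this
  have hσ : (n : ℤ) • ς v = ∑ x : {x // x ∈ I₀}, a x • (Pi.single x.1 1 : Fin m → ℤ) := by
    rw [← map_zsmul ς, hmain, map_sum]
    refine Finset.sum_congr rfl (fun x _ => ?_)
    rw [map_zsmul, hς x.1 x.2]
  have := congrFun hσ i
  simp only [Pi.smul_apply, smul_eq_mul, Finset.sum_apply] at this
  have hrhs : ∑ x : {x // x ∈ I₀}, a x * (Pi.single x.1 1 : Fin m → ℤ) i = 0 := by
    refine Finset.sum_eq_zero (fun x _ => ?_)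
    have hne : i ≠ x.1 := fun h => hi (h ▸ x.2)
    simp [Pi.single_apply, hne]
  rw [hrhs] at this
  have hnne : (n : ℤ) ≠ 0 := by exact_mod_cast hnpos.ne'
  exact (mul_eq_zero.mp this).resolve_left hnne

end SmoothFan

/-- with the splitting `ς` and `β(k) = Ψ(k) − ς(k)`, one has
`β(k) ∈ Eff` for every lattice point `k` of the support; moreover the family
`{w^{Ψ(k)} = Q^{β(k)} x^k}` is a topological `ℂ[[Q]]`-basis of `ℂ{M}`, expressed
concretely through the embedding `w`-monomial `v ↦ (Q\text{-exponent}, x\text{-exponent})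
= (v − ς(π v), π v)`: this map is injective on `M` and its image is exactly
`{(d, k) : k ∈ N ∩ |Σ|, d − β(k) ∈ Eff}`, so that every element of `ℂ{M}` is uniquely
`Σ_k c_k(Q)·Q^{β(k)} x^k` with `c_k ∈ ℂ[[Q]]`, i.e. `ℂ{M} = (⊕_k ℂ w^{Ψ(k)})[[Q]]`. -/
theorem w_monomials_topological_basis {D m : ℕ} (F : SmoothFan D m)
    (I₀ : Finset (Fin m)) (hI₀ : I₀ ∈ F.cones) (hcard : I₀.card = D)
    (ς : (Fin D → ℤ) →+ (Fin m → ℤ))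
    (hsec : ∀ v : Fin D → ℤ, F.toN (ς v) = v)
    (hς : ∀ i ∈ I₀, ς (F.b i) = Pi.single i 1) :
    (∀ k : Fin D → ℤ, F.InSupport k → F.beta ς k ∈ F.EffM) ∧
    Set.InjOn (fun v : Fin m → ℤ => (v - ς (F.toN v), F.toN v)) (F.Mmon : Set (Fin m → ℤ)) ∧
    (fun v : Fin m → ℤ => (v - ς (F.toN v), F.toN v)) '' (F.Mmon : Set (Fin m → ℤ)) =
      {p : (Fin m → ℤ) × (Fin D → ℤ) |
        F.InSupport p.2 ∧ p.1 - F.beta ς p.2 ∈ F.EffM} := by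
  have hσ0 : ∀ (v : Fin D → ℤ) (i : Fin m), i ∉ I₀ → ς v i = 0 :=
    fun v i hi => F.sigma_apply_eq_zero I₀ hI₀ hcard ς hς v hi
  -- β(k) ∈ Eff for k in the support
  have hbeta : ∀ k : Fin D → ℤ, F.InSupport k → F.beta ς k ∈ F.EffM := by
    intro k hk
    have h0 : F.toN (F.beta ς k) = 0 := by
      rw [SmoothFan.beta, F.toN_sub', F.toN_psi k hk, hsec k, sub_self]
    apply AddSubmonoid.subset_closure
    refine F.mem_effSet _ I₀ hI₀ h0 (fun i hi => ?_)
    rw [F.beta_apply, hσ0 k i hi, sub_zero]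
    exact Int.natCast_nonneg _
  -- key computation: p.1 - β(p.2) for the image point of v
  have hkey : ∀ v : Fin m → ℤ,
      (v - ς (F.toN v)) - F.beta ς (F.toN v) = v - (fun i => (F.Psi (F.toN v) i : ℤ)) := by
    intro v
    rw [SmoothFan.beta]
    abel
  refine ⟨hbeta, ?_, ?_⟩
  · -- injectivity
    intro v _ w _ h
    have h2 : F.toN v = F.toN w := congrArg Prod.snd h
    have h1 : v - ς (F.toN v) = w - ς (F.toN w) := congrArg Prod.fst h
    rw [h2] at h1
    exact sub_left_injective h1
  · -- image identification
    ext ⟨d, k⟩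
    constructor
    · rintro ⟨v, hv, hveq⟩
      have hd : v - ς (F.toN v) = d := congrArg Prod.fst hveq
      have hk : F.toN v = k := congrArg Prod.snd hveq
      have hv' : v ∈ F.EffM ⊔ nonnegM m := hv
      rw [AddSubmonoid.mem_sup] at hv'
      obtain ⟨e, he, nn, hnn, hen⟩ := hv' 
      have hnn' : ∀ i, 0 ≤ nn i := hnn
      have htv : F.toN v = F.toN nn := by
        rw [← hen, F.toN_add', F.toN_eff he, zero_add]
      have hsupp : F.InSupport k := by
        rw [← hk, htv]; exact F.inSupport_toN_nonneg nn hnn'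
      obtain ⟨⟨I, hIc, hIsupp⟩, _⟩ := F.psi_spec k hsupp
      have h2 : nn - (fun i => (F.Psi k i : ℤ)) ∈ F.EffSet := by
        refine F.mem_effSet _ I hIc ?_ ?_
        · rw [F.toN_sub', F.toN_psi k hsupp, ← htv, hk, sub_self]
        · intro i hi
          have hz : F.Psi k i = 0 := by
            by_contra h
            exact hi (hIsupp i h)
          simp only [Pi.sub_apply, hz, Nat.cast_zero, sub_zero]
          exact hnn' i
      refine ⟨hsupp, ?_⟩
      have heq : d - F.beta ς k = v - (fun i => (F.Psi k i : ℤ)) := by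
        rw [← hd, ← hk]; exact hkey v
      show d - F.beta ς k ∈ F.EffM
      rw [heq]
      rw [← hen, show e + nn - (fun i => (F.Psi k i : ℤ))
          = e + (nn - fun i => (F.Psi k i : ℤ)) by abel]
      exact AddSubmonoid.add_mem _ he (AddSubmonoid.subset_closure h2)
    · rintro ⟨hk, hd⟩
      refine ⟨d + ς k, ?_, ?_⟩
      · show d + ς k ∈ F.EffM ⊔ nonnegM m
        rw [AddSubmonoid.mem_sup]
        refine ⟨d - F.beta ς k, hd, (fun i => (F.Psi k i : ℤ)),
          (fun i => Int.natCast_nonneg _ : ∀ i, 0 ≤ (fun i => (F.Psi k i : ℤ)) i), ?_⟩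
        rw [SmoothFan.beta]
        abel
      · have hβ0 : F.toN (F.beta ς k) = 0 := by
          rw [SmoothFan.beta, F.toN_sub', F.toN_psi k hk, hsec k, sub_self]
        have htd : F.toN d = 0 := by
          have : F.toN (d - F.beta ς k) = 0 := F.toN_eff hd
          rw [F.toN_sub', hβ0, sub_zero] at this
          exact this
        have htoN : F.toN (d + ς k) = k := by
          rw [F.toN_add', htd, hsec k, zero_add]
        show (d + ς k - ς (F.toN (d + ς k)), F.toN (d + ς k)) = (d, k)
        rw [htoN]
        simp
end

section
/- In the Gauss–Manin system GM(F_λ) of the universal equivariant toric Landau–Ginzburg potential F_λ(x;y) = Σ_k y_k Q^{β(k)} x^k − λ·log x, the relation (zd + dF_λ∧) w^{Ψ(l)} ω_i = ( z l_i w^{Ψ(l)} + Σ_{k∈N∩|Σ|} k_i y_k w^{Ψ(k)+Ψ(l)} − λ_i w^{Ψ(l)} ) ω holds, where ω = dx_1/x_1 ∧ ⋯ ∧ dx_D/x_D and ω_i = ι(x_i ∂/∂x_i)ω. Consequently GM(F_λ) ≅ ℂ[z]{M}[[y]]·ω as a module, with λ_i acting by λ_i · w^{Ψ(l)}ω = (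 z l_i w^{Ψ(l)} + Σ_k k_i y_k w^{Ψ(k)+Ψ(l)} )ω. -/
open Finset
open scoped Classical

/-- Index of a monomial `Q^q · y^{yexp} · z^{zexp} · λ^{λexp} · x^{xexp}` of the module
`ℂ[z]{M}[[y]][λ]·ω`, written in the topological basis of `w`-monomials
(`x`-exponent `k` with `Q`-prefactor recorded in `q`). -/
structure GMIdx (D m : ℕ) where
  q : Fin m → ℤ
  y : (Fin D → ℤ) →₀ ℕ
  z : ℕ
  lam : Fin D →₀ ℕ
  x : Fin D → ℤ

namespace GMIdx

variable {D m : ℕ}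

/-- Multiplication by `z`. -/
def Zmul (g : GMIdx D m → ℂ) : GMIdx D m → ℂ :=
  fun p => if p.z = 0 then 0 else g {p with z := p.z - 1}

/-- (Free) multiplication by the equivariant parameter `λ_i`. -/
noncomputable def Lmul (i : Fin D) (g : GMIdx D m → ℂ) : GMIdx D m → ℂ :=
  fun p => if p.lam i = 0 then 0 else g {p with lam := p.lam - Finsupp.single i 1}

/-- Multiplication by `Q^d`. -/
def Qmul (d : Fin m → ℤ) (g : GMIdx D m → ℂ) : GMIdx D m → ℂ :=
  fun p => g {p with q := p.q - d}

/-- Multiplication (shift operator) by `w^{Ψ(k)} = Q^{β(k)} x^k`. -/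
noncomputable def Wmul (F : SmoothFan D m) (ς : (Fin D → ℤ) →+ (Fin m → ℤ))
    (k : Fin D → ℤ) (g : GMIdx D m → ℂ) : GMIdx D m → ℂ :=
  fun p => g {p with q := p.q - F.beta ς k, x := p.x - k}

/-- Multiplication by the deformation variable `y_k`. -/
noncomputable def Ymul (k : Fin D → ℤ) (g : GMIdx D m → ℂ) : GMIdx D m → ℂ :=
  fun p => if p.y k = 0 then 0 else g {p with y := p.y - Finsupp.single k 1}

/-- The logarithmic vector field `x_i ∂/∂x_i` (diagonal on monomials). -/
def Xlog (i : Fin D) (g : GMIdx D m → ℂ) : GMIdx D m → ℂ :=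
  fun p => (p.x i : ℂ) * g p

/-- Multiplication by `x_i ∂F/∂x_i = Σ_{k ∈ N∩|Σ|} k_i y_k w^{Ψ(k)}`,
the logarithmic derivative of the universal potential `F(x;y) = Σ_k y_k Q^{β(k)} x^k`. -/
noncomputable def FmulX (F : SmoothFan D m) (ς : (Fin D → ℤ) →+ (Fin m → ℤ))
    (i : Fin D) (g : GMIdx D m → ℂ) : GMIdx D m → ℂ :=
  fun p => ∑ k ∈ p.y.support,
    if F.InSupport k then
      (k i : ℂ) * g {p with q := p.q - F.beta ς k, y := p.y - Finsupp.single k 1,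
                            x := p.x - k}
    else 0

/-- The `i`-th component of the twisted de Rham differential:
`(zd + dF_λ∧)(g ω_i) = (z x_i∂_i g + (x_i∂_i F) g − λ_i g) ω`. -/
noncomputable def Dtw (F : SmoothFan D m) (ς : (Fin D → ℤ) →+ (Fin m → ℤ))
    (i : Fin D) (g : GMIdx D m → ℂ) : GMIdx D m → ℂ :=
  Zmul (Xlog i g) + FmulX F ς i g - Lmul i g

open scoped Classical in
/-- The delta element supported at one monomial. -/
noncomputable def delta (p₀ : GMIdx D m) : GMIdx D m → ℂ :=
  fun p => if p = p₀ then 1 else 0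

/-- The basis element `w^{Ψ(l)} ω`. -/
noncomputable def wB (F : SmoothFan D m) (ς : (Fin D → ℤ) →+ (Fin m → ℤ))
    (l : Fin D → ℤ) : GMIdx D m → ℂ :=
  delta ⟨F.beta ς l, 0, 0, 0, l⟩

/-- The image of the twisted differential `zd + dF_λ∧` (the relations submodule). -/
noncomputable def ImD (F : SmoothFan D m) (ς : (Fin D → ℤ) →+ (Fin m → ℤ)) :
    Set (GMIdx D m → ℂ) :=
  {h | ∃ g : Fin D → (GMIdx D m → ℂ), h = ∑ j, Dtw F ς j (g j)}

end GMIdx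
namespace GMAux
open GMIdx

variable {D m : ℕ}

/-- total weight in `z` and `y`. -/
def mu (p : GMIdx D m) : ℕ := p.z + p.y.sum fun _ n => n

/-- decrease the `z`-exponent. -/
def zdec (p : GMIdx D m) : GMIdx D m := {p with z := p.z - 1}

/-- the point read by `FmulX` for a given `k`. -/
noncomputable def ydec (F : SmoothFan D m) (ς : (Fin D → ℤ) →+ (Fin m → ℤ))
    (p : GMIdx D m) (k : Fin D → ℤ) : GMIdx D m :=
  {p with q := p.q - F.beta ς k, y := p.y - Finsupp.single k 1, x := p.x - k}

@[simp] lemma zdec_q (p : GMIdx D m) : (zdec p).q = p.q := rfl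
@[simp] lemma zdec_y (p : GMIdx D m) : (zdec p).y = p.y := rfl
@[simp] lemma zdec_z (p : GMIdx D m) : (zdec p).z = p.z - 1 := rfl
@[simp] lemma zdec_lam (p : GMIdx D m) : (zdec p).lam = p.lam := rfl
@[simp] lemma zdec_x (p : GMIdx D m) : (zdec p).x = p.x := rfl

variable {F : SmoothFan D m} {ς : (Fin D → ℤ) →+ (Fin m → ℤ)}

@[simp] lemma ydec_q (p : GMIdx D m) (k) : (ydec F ς p k).q = p.q - F.beta ς k := rfl
@[simp] lemma ydec_y (p : GMIdx D m) (k) : (ydec F ς p k).y = p.y - Finsupp.single k 1 := rfl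
@[simp] lemma ydec_z (p : GMIdx D m) (k) : (ydec F ς p k).z = p.z := rfl
@[simp] lemma ydec_lam (p : GMIdx D m) (k) : (ydec F ς p k).lam = p.lam := rfl
@[simp] lemma ydec_x (p : GMIdx D m) (k) : (ydec F ς p k).x = p.x - k := rfl

lemma sum_sub_single (y : (Fin D → ℤ) →₀ ℕ) (k : Fin D → ℤ) (hk : y k ≠ 0) :
    ((y - Finsupp.single k 1).sum fun _ n => n) + 1 = y.sum fun _ n => n := by
  classical
  have hsub : (y - Finsupp.single k 1).support ⊆ y.support := by
    intro a ha
    rw [Finsupp.mem_support_iff] at ha ⊢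
    rw [Finsupp.tsub_apply] at ha
    omega
  rw [Finsupp.sum_of_support_subset _ hsub _ (fun _ _ => rfl)]
  have hk' : k ∈ y.support := Finsupp.mem_support_iff.mpr hk
  rw [Finsupp.sum, ← Finset.add_sum_erase _ _ hk', ← Finset.add_sum_erase _ _ hk']
  have h1 : ∀ a ∈ y.support.erase k, ((y - Finsupp.single k 1) : (Fin D → ℤ) →₀ ℕ) a = y a := by
    intro a ha
    have hne : a ≠ k := Finset.ne_of_mem_erase ha
    rw [Finsupp.tsub_apply, Finsupp.single_apply, if_neg (Ne.symm hne)]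
    omega
  rw [Finset.sum_congr rfl h1]
  have h2 : ((y - Finsupp.single k 1) : (Fin D → ℤ) →₀ ℕ) k = y k - 1 := by
    rw [Finsupp.tsub_apply, Finsupp.single_eq_same]
  rw [h2]
  have h3 : (y.support.erase k).sum ⇑y = ∑ a ∈ y.support.erase k, y a := rfl
  omega

lemma mu_zdec_lt (p : GMIdx D m) (hz : p.z ≠ 0) : mu (zdec p) < mu p := by
  simp only [mu, zdec_z, zdec_y]
  omega

lemma mu_ydec_lt (p : GMIdx D m) (k : Fin D → ℤ) (hk : k ∈ p.y.support) :
    mu (ydec F ς p k) < mu p := by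
  have := sum_sub_single p.y k (Finsupp.mem_support_iff.mp hk)
  simp only [mu, ydec_z, ydec_y]
  omega

end GMAux
namespace GMAux
open GMIdx

variable {D m : ℕ} {F : SmoothFan D m} {ς : (Fin D → ℤ) →+ (Fin m → ℤ)}

/-- the `λ`-degree preserving part of the twisted differential. -/
noncomputable def Aop (F : SmoothFan D m) (ς : (Fin D → ℤ) →+ (Fin m → ℤ)) (j : Fin D)
    (g : GMIdx D m → ℂ) : GMIdx D m → ℂ :=
  Zmul (Xlog j g) + FmulX F ς j g

lemma Aop_apply (F : SmoothFan D m) (ς : (Fin D → ℤ) →+ (Fin m → ℤ)) (j : Fin D)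
    (g : GMIdx D m → ℂ) (p : GMIdx D m) : Aop F ς j g p =
    (if p.z = 0 then 0 else (p.x j : ℂ) * g (zdec p))
      + ∑ k ∈ p.y.support,
          (if F.InSupport k then (k j : ℂ) * g (ydec F ς p k) else 0) := rfl

lemma Dtw_eq (F : SmoothFan D m) (ς : (Fin D → ℤ) →+ (Fin m → ℤ)) (i : Fin D)
    (g : GMIdx D m → ℂ) : Dtw F ς i g = Aop F ς i g - Lmul i g := rfl

lemma Aop_congr {j : Fin D} {u v : GMIdx D m → ℂ} {p : GMIdx D m}
    (h : ∀ q, mu q < mu p → q.lam = p.lam → u q = v q) :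
    Aop F ς j u p = Aop F ς j v p := by
  rw [Aop_apply, Aop_apply]
  congr 1
  · by_cases hz : p.z = 0
    · rw [if_pos hz, if_pos hz]
    · rw [if_neg hz, if_neg hz, h _ (mu_zdec_lt p hz) rfl]
  · refine Finset.sum_congr rfl fun k hk => ?_
    by_cases hs : F.InSupport k
    · rw [if_pos hs, if_pos hs, h _ (mu_ydec_lt p k hk) rfl]
    · rw [if_neg hs, if_neg hs]

lemma Aop_add (F : SmoothFan D m) (ς : (Fin D → ℤ) →+ (Fin m → ℤ)) (j : Fin D)
    (u v : GMIdx D m → ℂ) :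
    Aop F ς j (u + v) = Aop F ς j u + Aop F ς j v := by
  funext p
  simp only [Aop_apply, Pi.add_apply]
  have h1 : (if p.z = 0 then (0:ℂ) else (p.x j : ℂ) * (u (zdec p) + v (zdec p)))
      = (if p.z = 0 then 0 else (p.x j : ℂ) * u (zdec p))
        + (if p.z = 0 then 0 else (p.x j : ℂ) * v (zdec p)) := by
    split <;> ring
  rw [h1]
  have h2 : ∀ k ∈ p.y.support,
      (if F.InSupport k then (k j : ℂ) * (u (ydec F ς p k) + v (ydec F ς p k)) else 0)
      = (if F.InSupport k then (k j : ℂ) * u (ydec F ς p k) else 0)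
        + (if F.InSupport k then (k j : ℂ) * v (ydec F ς p k) else 0) := by
    intro k _; split <;> ring
  rw [Finset.sum_congr rfl h2, Finset.sum_add_distrib]
  ring

lemma Aop_zero (F : SmoothFan D m) (ς : (Fin D → ℤ) →+ (Fin m → ℤ)) (j : Fin D) :
    Aop F ς j (0 : GMIdx D m → ℂ) = 0 := by
  funext p
  simp [Aop_apply]

lemma Aop_neg (F : SmoothFan D m) (ς : (Fin D → ℤ) →+ (Fin m → ℤ)) (j : Fin D)
    (u : GMIdx D m → ℂ) : Aop F ς j (-u) = -Aop F ς j u := by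
  have := Aop_add F ς j u (-u)
  rw [add_neg_cancel, Aop_zero] at this
  linear_combination (norm := module) -this

lemma Aop_sub (F : SmoothFan D m) (ς : (Fin D → ℤ) →+ (Fin m → ℤ)) (j : Fin D)
    (u v : GMIdx D m → ℂ) : Aop F ς j (u - v) = Aop F ς j u - Aop F ς j v := by
  rw [sub_eq_add_neg, Aop_add, Aop_neg, sub_eq_add_neg]

lemma Aop_sum {ι : Type*} (F : SmoothFan D m) (ς : (Fin D → ℤ) →+ (Fin m → ℤ)) (j : Fin D)
    (s : Finset ι) (u : ι → GMIdx D m → ℂ) :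
    Aop F ς j (∑ i ∈ s, u i) = ∑ i ∈ s, Aop F ς j (u i) := by
  classical
  induction s using Finset.induction with
  | empty => simpa using Aop_zero F ς j
  | insert _ _ hni ih =>
      rw [Finset.sum_insert hni, Finset.sum_insert hni, Aop_add, ih]

/-- finsupp helpers -/
lemma finsupp_sub_single_eq_zero {α : Type*} (a : α →₀ ℕ) (i : α) (h : a i ≠ 0) :
    a - Finsupp.single i 1 = 0 ↔ a = Finsupp.single i 1 := by
  classical
  constructor
  · intro h0
    have hle : a ≤ Finsupp.single i 1 := tsub_eq_zero_iff_le.mp h0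
    ext t
    have := (Finsupp.le_def.mp hle) t
    rw [Finsupp.single_apply] at this ⊢
    by_cases hti : i = t
    · subst hti; simp at this ⊢; omega
    · rw [if_neg hti] at this ⊢; omega
  · intro h0; rw [h0]; exact tsub_self _

lemma mk_lam_zero (p : GMIdx D m) (h : p.lam = 0) :
    ({ q := p.q, y := p.y, z := p.z, lam := 0, x := p.x } : GMIdx D m) = p := by
  cases p with
  | mk q y z lam x => simp_all

end GMAux
namespace GMAux
open GMIdx

variable {D m : ℕ} {F : SmoothFan D m} {ς : (Fin D → ℤ) →+ (Fin m → ℤ)}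

lemma zdec_ydec (p : GMIdx D m) (k : Fin D → ℤ) :
    zdec (ydec F ς p k) = ydec F ς (zdec p) k := rfl

lemma ydec_ydec (p : GMIdx D m) (k k' : Fin D → ℤ) :
    ydec F ς (ydec F ς p k) k' = ydec F ς (ydec F ς p k') k := by
  simp only [ydec]
  congr 1
  · rw [sub_right_comm]
  · ext a
    simp only [Finsupp.tsub_apply]
    omega
  · rw [sub_right_comm]

lemma mem_support_pair_iff (y : (Fin D → ℤ) →₀ ℕ) (k k' : Fin D → ℤ)
    (hk : y k ≠ 0) (hk' : y k' ≠ 0) :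
    k' ∈ ((y - Finsupp.single k 1) : (Fin D → ℤ) →₀ ℕ).support
      ↔ k ∈ ((y - Finsupp.single k' 1) : (Fin D → ℤ) →₀ ℕ).support := by
  classical
  rw [Finsupp.mem_support_iff, Finsupp.mem_support_iff, Finsupp.tsub_apply,
    Finsupp.tsub_apply, Finsupp.single_apply, Finsupp.single_apply]
  by_cases h : k = k'
  · subst h; simp
  · rw [if_neg h, if_neg fun e => h e.symm]
    omega

lemma double_sum_swap (y : (Fin D → ℤ) →₀ ℕ) (f : (Fin D → ℤ) → (Fin D → ℤ) → ℂ) :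
    (∑ k ∈ y.support, ∑ k' ∈ ((y - Finsupp.single k 1) : (Fin D → ℤ) →₀ ℕ).support, f k k')
      = ∑ k ∈ y.support,
          ∑ k' ∈ ((y - Finsupp.single k 1) : (Fin D → ℤ) →₀ ℕ).support, f k' k := by
  classical
  have key : ∀ (g : (Fin D → ℤ) → (Fin D → ℤ) → ℂ), ∀ k ∈ y.support,
      (∑ k' ∈ ((y - Finsupp.single k 1) : (Fin D → ℤ) →₀ ℕ).support, g k k')
        = ∑ k' ∈ y.support,
            (if k' ∈ ((y - Finsupp.single k 1) : (Fin D → ℤ) →₀ ℕ).support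
             then g k k' else 0) := by
    intro g k _
    rw [Finset.sum_ite_mem, Finset.inter_eq_right.mpr Finsupp.support_tsub]
  rw [Finset.sum_congr rfl (key f), Finset.sum_congr rfl (key (fun k k' => f k' k))]
  rw [Finset.sum_comm]
  refine Finset.sum_congr rfl fun k hk => Finset.sum_congr rfl fun k' hk' => ?_
  by_cases h : k' ∈ ((y - Finsupp.single k 1) : (Fin D → ℤ) →₀ ℕ).support
  · rw [if_pos h, if_pos ((mem_support_pair_iff y k k' (Finsupp.mem_support_iff.mp hk)
      (Finsupp.mem_support_iff.mp hk')).mp h)]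
  · rw [if_neg h, if_neg fun h' => h ((mem_support_pair_iff y k k'
      (Finsupp.mem_support_iff.mp hk) (Finsupp.mem_support_iff.mp hk')).mpr h')]

lemma FF_comm (j j' : Fin D) (u : GMIdx D m → ℂ) (p : GMIdx D m) :
    (∑ k ∈ p.y.support, if F.InSupport k then (k j : ℂ) *
        (∑ k' ∈ ((p.y - Finsupp.single k 1) : (Fin D → ℤ) →₀ ℕ).support,
          if F.InSupport k' then (k' j' : ℂ) * u (ydec F ς (ydec F ς p k) k') else 0)
      else 0)
    = ∑ k ∈ p.y.support, if F.InSupport k then (k j' : ℂ) *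
        (∑ k' ∈ ((p.y - Finsupp.single k 1) : (Fin D → ℤ) →₀ ℕ).support,
          if F.InSupport k' then (k' j : ℂ) * u (ydec F ς (ydec F ς p k) k') else 0)
      else 0 := by
  classical
  have norm : ∀ (a b : Fin D),
      (∑ k ∈ p.y.support, if F.InSupport k then (k a : ℂ) *
        (∑ k' ∈ ((p.y - Finsupp.single k 1) : (Fin D → ℤ) →₀ ℕ).support,
          if F.InSupport k' then (k' b : ℂ) * u (ydec F ς (ydec F ς p k) k') else 0)
      else 0)
      = ∑ k ∈ p.y.support,
          ∑ k' ∈ ((p.y - Finsupp.single k 1) : (Fin D → ℤ) →₀ ℕ).support,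
            (if F.InSupport k ∧ F.InSupport k'
             then (k a : ℂ) * ((k' b : ℂ) * u (ydec F ς (ydec F ς p k) k')) else 0) := by
    intro a b
    refine Finset.sum_congr rfl fun k hk => ?_
    by_cases hs : F.InSupport k
    · rw [if_pos hs, Finset.mul_sum]
      refine Finset.sum_congr rfl fun k' hk' => ?_
      by_cases hs' : F.InSupport k'
      · rw [if_pos hs', if_pos ⟨hs, hs'⟩]
      · rw [if_neg hs', if_neg (fun hh => hs' hh.2), mul_zero]
    · rw [if_neg hs, eq_comm, Finset.sum_eq_zero]
      intro k' _
      rw [if_neg (fun hh => hs hh.1)]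
  rw [norm j j', norm j' j, double_sum_swap]
  refine Finset.sum_congr rfl fun k hk => Finset.sum_congr rfl fun k' hk' => ?_
  rw [ydec_ydec]
  by_cases h1 : F.InSupport k <;> by_cases h2 : F.InSupport k'
  · rw [if_pos ⟨h2, h1⟩, if_pos ⟨h1, h2⟩]; ring
  · rw [if_neg (fun hh => h2 hh.1), if_neg (fun hh => h2 hh.2)]
  · rw [if_neg (fun hh => h1 hh.2), if_neg (fun hh => h1 hh.1)]
  · rw [if_neg (fun hh => h1 hh.2), if_neg (fun hh => h1 hh.1)]

end GMAux
namespace GMAux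
open GMIdx

variable {D m : ℕ} {F : SmoothFan D m} {ς : (Fin D → ℤ) →+ (Fin m → ℤ)}

lemma Aop_normform (u : GMIdx D m → ℂ) (p : GMIdx D m) (a b : Fin D) :
    Aop F ς a (Aop F ς b u) p =
      (if p.z = 0 then 0 else if p.z - 1 = 0 then (0:ℂ)
        else ((p.x a : ℂ) * (p.x b : ℂ)) * u (zdec (zdec p)))
      + (if p.z = 0 then 0 else ∑ k ∈ p.y.support, if F.InSupport k then
          ((p.x a : ℂ) * (k b : ℂ) + (k a : ℂ) * ((p.x b : ℂ) - (k b : ℂ)))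
            * u (ydec F ς (zdec p) k) else 0)
      + (∑ k ∈ p.y.support, if F.InSupport k then (k a : ℂ) *
          (∑ k' ∈ ((p.y - Finsupp.single k 1) : (Fin D → ℤ) →₀ ℕ).support,
            if F.InSupport k' then (k' b : ℂ) * u (ydec F ς (ydec F ς p k) k') else 0)
          else 0) := by
  simp only [Aop_apply, zdec_z, zdec_y, zdec_x, ydec_z, ydec_y, ydec_x, Pi.sub_apply,
    Int.cast_sub, zdec_ydec]
  have h1 : (if p.z = 0 then (0:ℂ) else (p.x a : ℂ) *
        ((if p.z - 1 = 0 then 0 else (p.x b : ℂ) * u (zdec (zdec p)))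
          + ∑ k ∈ p.y.support,
              if F.InSupport k then (k b : ℂ) * u (ydec F ς (zdec p) k) else 0))
      = (if p.z = 0 then 0 else if p.z - 1 = 0 then (0:ℂ)
          else ((p.x a : ℂ) * (p.x b : ℂ)) * u (zdec (zdec p)))
        + (if p.z = 0 then 0 else (p.x a : ℂ) * ∑ k ∈ p.y.support,
            if F.InSupport k then (k b : ℂ) * u (ydec F ς (zdec p) k) else 0) := by
    split_ifs <;> ring
  have h2 : (∑ k ∈ p.y.support, if F.InSupport k then (k a : ℂ) *
        ((if p.z = 0 then 0 else ((p.x b : ℂ) - (k b : ℂ)) * u (ydec F ς (zdec p) k))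
          + ∑ k' ∈ ((p.y - Finsupp.single k 1) : (Fin D → ℤ) →₀ ℕ).support,
              if F.InSupport k' then (k' b : ℂ) * u (ydec F ς (ydec F ς p k) k') else 0)
        else 0)
      = (∑ k ∈ p.y.support, if F.InSupport k then (k a : ℂ) *
          (if p.z = 0 then 0 else ((p.x b : ℂ) - (k b : ℂ)) * u (ydec F ς (zdec p) k))
          else 0)
        + (∑ k ∈ p.y.support, if F.InSupport k then (k a : ℂ) *
            (∑ k' ∈ ((p.y - Finsupp.single k 1) : (Fin D → ℤ) →₀ ℕ).support,
              if F.InSupport k' then (k' b : ℂ) * u (ydec F ς (ydec F ς p k) k') else 0)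
            else 0) := by
    rw [← Finset.sum_add_distrib]
    refine Finset.sum_congr rfl fun k hk => ?_
    split_ifs <;> ring
  have h3 : (if p.z = 0 then 0 else (p.x a : ℂ) * ∑ k ∈ p.y.support,
        if F.InSupport k then (k b : ℂ) * u (ydec F ς (zdec p) k) else 0)
      + (∑ k ∈ p.y.support, if F.InSupport k then (k a : ℂ) *
          (if p.z = 0 then 0 else ((p.x b : ℂ) - (k b : ℂ)) * u (ydec F ς (zdec p) k))
          else 0)
      = (if p.z = 0 then 0 else ∑ k ∈ p.y.support, if F.InSupport k then
          ((p.x a : ℂ) * (k b : ℂ) + (k a : ℂ) * ((p.x b : ℂ) - (k b : ℂ)))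
            * u (ydec F ς (zdec p) k) else 0) := by
    by_cases hz : p.z = 0
    · simp [hz]
    · rw [if_neg hz, if_neg hz, Finset.mul_sum, ← Finset.sum_add_distrib]
      refine Finset.sum_congr rfl fun k hk => ?_
      rw [if_neg hz]
      split_ifs <;> ring
  erw [h1, h2]
  linear_combination h3

lemma Aop_comm (j j' : Fin D) (u : GMIdx D m → ℂ) (p : GMIdx D m) :
    Aop F ς j (Aop F ς j' u) p = Aop F ς j' (Aop F ς j u) p := by
  rw [Aop_normform, Aop_normform]
  have e1 : (if p.z = 0 then 0 else if p.z - 1 = 0 then (0:ℂ)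
        else ((p.x j : ℂ) * (p.x j' : ℂ)) * u (zdec (zdec p)))
      = (if p.z = 0 then 0 else if p.z - 1 = 0 then (0:ℂ)
        else ((p.x j' : ℂ) * (p.x j : ℂ)) * u (zdec (zdec p))) := by
    split_ifs <;> ring
  have e2 : (if p.z = 0 then 0 else ∑ k ∈ p.y.support, if F.InSupport k then
        ((p.x j : ℂ) * (k j' : ℂ) + (k j : ℂ) * ((p.x j' : ℂ) - (k j' : ℂ)))
          * u (ydec F ς (zdec p) k) else 0)
      = (if p.z = 0 then 0 else ∑ k ∈ p.y.support, if F.InSupport k then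
        ((p.x j' : ℂ) * (k j : ℂ) + (k j' : ℂ) * ((p.x j : ℂ) - (k j : ℂ)))
          * u (ydec F ς (zdec p) k) else 0) := by
    by_cases hz : p.z = 0
    · rw [if_pos hz, if_pos hz]
    · rw [if_neg hz, if_neg hz]
      refine Finset.sum_congr rfl fun k hk => ?_
      split_ifs <;> ring
  rw [e1, e2, FF_comm]

end GMAux
namespace GMAux
open GMIdx

variable {D m : ℕ}

/-- division by the top `λ`-variable. -/
noncomputable def divTop (j : Fin D) (g : GMIdx D m → ℂ) : GMIdx D m → ℂ :=
  fun q => if ∀ t, j < t → q.lam t = 0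
    then g { q with lam := q.lam + Finsupp.single j 1 } else 0

/-- substitution `λ_j ← A_j` (evaluation of the Gauss–Manin reduction). -/
noncomputable def eps (F : SmoothFan D m) (ς : (Fin D → ℤ) →+ (Fin m → ℤ))
    (g : GMIdx D m → ℂ) (p : GMIdx D m) : ℂ :=
  g { p with lam := 0 }
  + ∑ j : Fin D,
      ((if hz : p.z = 0 then 0 else (p.x j : ℂ) * eps F ς (divTop j g) (zdec p))
       + ∑ k ∈ p.y.support.attach,
          (if F.InSupport k.1 then (k.1 j : ℂ) * eps F ς (divTop j g) (ydec F ς p k.1)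
           else 0))
termination_by mu p
decreasing_by
  · exact mu_zdec_lt p hz
  · exact mu_ydec_lt p k.1 k.2

variable {F : SmoothFan D m} {ς : (Fin D → ℤ) →+ (Fin m → ℤ)}

lemma eps_eq (F : SmoothFan D m) (ς : (Fin D → ℤ) →+ (Fin m → ℤ)) (g : GMIdx D m → ℂ)
    (p : GMIdx D m) :
    eps F ς g p = g { p with lam := 0 }
      + ∑ j : Fin D, Aop F ς j (eps F ς (divTop j g)) p := by
  rw [eps]
  congr 1
  refine Finset.sum_congr rfl fun j _ => ?_
  rw [Aop_apply]
  congr 1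
  exact Finset.sum_attach p.y.support
      (fun k => if F.InSupport k then (k j : ℂ) * eps F ς (divTop j g) (ydec F ς p k) else 0)

lemma Aop_lam (j : Fin D) (h : GMIdx D m → ℂ) (p : GMIdx D m) :
    Aop F ς j h { p with lam := 0 }
      = Aop F ς j (fun q => h { q with lam := 0 }) p := rfl

lemma divTop_add (j : Fin D) (u v : GMIdx D m → ℂ) :
    divTop j (u + v) = divTop j u + divTop j v := by
  funext q
  simp only [divTop, Pi.add_apply]
  split <;> simp

lemma divTop_zero (j : Fin D) : divTop j (0 : GMIdx D m → ℂ) = 0 := by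
  funext q
  simp only [divTop, Pi.zero_apply]
  split <;> rfl

lemma divTop_neg (j : Fin D) (u : GMIdx D m → ℂ) : divTop j (-u) = -divTop j u := by
  funext q
  simp only [divTop, Pi.neg_apply]
  split <;> simp

lemma eps_zero (F : SmoothFan D m) (ς : (Fin D → ℤ) →+ (Fin m → ℤ)) :
    ∀ (n : ℕ) (p : GMIdx D m), mu p = n → eps F ς (0 : GMIdx D m → ℂ) p = 0 := by
  intro n
  induction n using Nat.strong_induction_on with
  | _ n ih =>
    intro p hp
    rw [eps_eq]
    simp only [Pi.zero_apply, divTop_zero]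
    rw [Finset.sum_eq_zero, add_zero]
    intro j _
    rw [Aop_congr (v := (0 : GMIdx D m → ℂ))
      (fun q hq _ => ih (mu q) (hp ▸ hq) q rfl), Aop_zero]
    rfl

lemma eps_zero' (p : GMIdx D m) : eps F ς (0 : GMIdx D m → ℂ) p = 0 :=
  eps_zero F ς (mu p) p rfl

lemma eps_zero_fun : eps F ς (0 : GMIdx D m → ℂ) = 0 := funext fun p => eps_zero' p

lemma eps_add (F : SmoothFan D m) (ς : (Fin D → ℤ) →+ (Fin m → ℤ)) :
    ∀ (n : ℕ) (p : GMIdx D m), mu p = n → ∀ u v : GMIdx D m → ℂ,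
      eps F ς (u + v) p = eps F ς u p + eps F ς v p := by
  intro n
  induction n using Nat.strong_induction_on with
  | _ n ih =>
    intro p hp u v
    rw [eps_eq, eps_eq, eps_eq]
    simp only [Pi.add_apply]
    have : ∀ j ∈ (Finset.univ : Finset (Fin D)),
        Aop F ς j (eps F ς (divTop j (u + v))) p
          = Aop F ς j (eps F ς (divTop j u)) p + Aop F ς j (eps F ς (divTop j v)) p := by
      intro j _
      rw [divTop_add]
      rw [Aop_congr (v := eps F ς (divTop j u) + eps F ς (divTop j v))
        (fun q hq _ => ih (mu q) (hp ▸ hq) q rfl _ _), Aop_add]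
      rfl
    rw [Finset.sum_congr rfl this, Finset.sum_add_distrib]
    ring

lemma eps_add' (u v : GMIdx D m → ℂ) (p : GMIdx D m) :
    eps F ς (u + v) p = eps F ς u p + eps F ς v p :=
  eps_add F ς (mu p) p rfl u v

lemma eps_neg' (u : GMIdx D m → ℂ) (p : GMIdx D m) :
    eps F ς (-u) p = -eps F ς u p := by
  have := eps_add' (F := F) (ς := ς) u (-u) p
  rw [add_neg_cancel, eps_zero'] at this
  linear_combination -this

lemma eps_sub' (u v : GMIdx D m → ℂ) (p : GMIdx D m) :
    eps F ς (u - v) p = eps F ς u p - eps F ς v p := by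
  rw [sub_eq_add_neg, eps_add', eps_neg', sub_eq_add_neg]

lemma eps_sum {ι : Type*} (s : Finset ι) (u : ι → GMIdx D m → ℂ) (p : GMIdx D m) :
    eps F ς (∑ i ∈ s, u i) p = ∑ i ∈ s, eps F ς (u i) p := by
  classical
  induction s using Finset.induction with
  | empty => simpa using eps_zero' p
  | insert _ _ hni ih =>
      rw [Finset.sum_insert hni, Finset.sum_insert hni, eps_add', ih]

end GMAux
namespace GMAux
open GMIdx

variable {D m : ℕ} {F : SmoothFan D m} {ς : (Fin D → ℤ) →+ (Fin m → ℤ)}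

@[simp] lemma lamset_q (p : GMIdx D m) (a : Fin D →₀ ℕ) :
    ({ p with lam := a } : GMIdx D m).q = p.q := rfl
@[simp] lemma lamset_y (p : GMIdx D m) (a : Fin D →₀ ℕ) :
    ({ p with lam := a } : GMIdx D m).y = p.y := rfl
@[simp] lemma lamset_z (p : GMIdx D m) (a : Fin D →₀ ℕ) :
    ({ p with lam := a } : GMIdx D m).z = p.z := rfl
@[simp] lemma lamset_lam (p : GMIdx D m) (a : Fin D →₀ ℕ) :
    ({ p with lam := a } : GMIdx D m).lam = a := rfl
@[simp] lemma lamset_x (p : GMIdx D m) (a : Fin D →₀ ℕ) :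
    ({ p with lam := a } : GMIdx D m).x = p.x := rfl

lemma zdec_lamset (p : GMIdx D m) (a : Fin D →₀ ℕ) :
    zdec ({ p with lam := a }) = { zdec p with lam := a } := rfl

lemma ydec_lamset (p : GMIdx D m) (a : Fin D →₀ ℕ) (k : Fin D → ℤ) :
    ydec F ς ({ p with lam := a }) k = { ydec F ς p k with lam := a } := rfl

lemma divTop_Aop (j j' : Fin D) (h : GMIdx D m → ℂ) :
    divTop j' (Aop F ς j h) = Aop F ς j (divTop j' h) := by
  funext q
  by_cases hc : ∀ t, j' < t → q.lam t = 0
  · simp only [divTop, if_pos hc, Aop_apply, lamset_q, lamset_y, lamset_z, lamset_lam,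
      lamset_x, zdec_lamset, ydec_lamset, zdec_lam, ydec_lam]
    simp only [eq_true hc, ↓reduceIte]
  · simp only [divTop, if_neg hc, Aop_apply, zdec_lam, ydec_lam]
    simp [hc]

lemma eps_Aop (F : SmoothFan D m) (ς : (Fin D → ℤ) →+ (Fin m → ℤ)) (j : Fin D) :
    ∀ (n : ℕ) (p : GMIdx D m), mu p = n → ∀ h : GMIdx D m → ℂ,
      eps F ς (Aop F ς j h) p = Aop F ς j (eps F ς h) p := by
  intro n
  induction n using Nat.strong_induction_on with
  | _ n ih =>
    intro p hp h
    rw [eps_eq]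
    have step1 : ∀ j' ∈ (Finset.univ : Finset (Fin D)),
        Aop F ς j' (eps F ς (divTop j' (Aop F ς j h))) p
          = Aop F ς j (Aop F ς j' (eps F ς (divTop j' h))) p := by
      intro j' _
      rw [divTop_Aop]
      rw [Aop_congr (v := Aop F ς j (eps F ς (divTop j' h)))
        (fun q hq _ => ih (mu q) (hp ▸ hq) q rfl _), Aop_comm]
    rw [Finset.sum_congr rfl step1, Aop_lam]
    have : (fun q => h { q with lam := 0 })
        + ∑ j' : Fin D, Aop F ς j' (eps F ς (divTop j' h)) = eps F ς h := by
      funext q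
      rw [eq_comm, eps_eq]
      simp [Finset.sum_apply]
    calc Aop F ς j (fun q => h { q with lam := 0 }) p
          + ∑ j' : Fin D, Aop F ς j (Aop F ς j' (eps F ς (divTop j' h))) p
        = Aop F ς j ((fun q => h { q with lam := 0 })
            + ∑ j' : Fin D, Aop F ς j' (eps F ς (divTop j' h))) p := by
          rw [Aop_add, Aop_sum]
          simp [Finset.sum_apply]
      _ = Aop F ς j (eps F ς h) p := by rw [this]

lemma eps_lamfree (f : GMIdx D m → ℂ) (hf : ∀ q : GMIdx D m, q.lam ≠ 0 → f q = 0)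
    (p : GMIdx D m) (hp : p.lam = 0) : eps F ς f p = f p := by
  rw [eps_eq]
  have h1 : ∀ j : Fin D, divTop j f = (0 : GMIdx D m → ℂ) := by
    intro j
    funext q
    simp only [divTop, Pi.zero_apply]
    split
    · apply hf
      simp only [lamset_lam]
      intro hcontra
      have := (Finsupp.add_eq_zero_iff _ _).mp hcontra
      exact one_ne_zero (Finsupp.single_eq_zero.mp this.2)
    · rfl
  have h2 : ∀ j ∈ (Finset.univ : Finset (Fin D)),
      Aop F ς j (eps F ς (divTop j f)) p = 0 := by
    intro j _
    rw [h1 j, eps_zero_fun, Aop_zero]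
    rfl
  rw [Finset.sum_eq_zero h2, add_zero]
  rw [mk_lam_zero p hp]

end GMAux
namespace GMAux
open GMIdx

variable {D m : ℕ} {F : SmoothFan D m} {ς : (Fin D → ℤ) →+ (Fin m → ℤ)}

/-- restriction to `λ`-monomials with top variable `≤ j`. -/
noncomputable def restr (j : Fin D) (g : GMIdx D m → ℂ) : GMIdx D m → ℂ :=
  fun q => if ∀ t, j < t → q.lam t = 0 then g q else 0

lemma divTop_Lmul_lt {j j' : Fin D} (hlt : j' < j) (g : GMIdx D m → ℂ) :
    divTop j' (Lmul j g) = 0 := by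
  funext q
  simp only [divTop, Lmul, lamset_lam, Pi.zero_apply]
  by_cases hc : ∀ t, j' < t → q.lam t = 0
  · rw [if_pos hc, if_pos]
    rw [Finsupp.add_apply, Finsupp.single_apply, if_neg (ne_of_lt hlt), hc j hlt]
    omega
  · rw [if_neg hc]

lemma divTop_Lmul_eq (j : Fin D) (g : GMIdx D m → ℂ) :
    divTop j (Lmul j g) = restr j g := by
  funext q
  simp only [divTop, Lmul, restr, lamset_lam]
  by_cases hc : ∀ t, j < t → q.lam t = 0
  · rw [if_pos hc, if_pos hc, if_neg]
    · have hl : q.lam + Finsupp.single j 1 - Finsupp.single j 1 = q.lam :=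
        add_tsub_cancel_right _ _
      rw [hl]
    · rw [Finsupp.add_apply, Finsupp.single_eq_same]
      omega
  · rw [if_neg hc, if_neg hc]

lemma divTop_Lmul_gt {j j' : Fin D} (hgt : j < j') (g : GMIdx D m → ℂ) :
    divTop j' (Lmul j g) = Lmul j (divTop j' g) := by
  funext q
  have hcond : (∀ t, j' < t → ((q.lam - Finsupp.single j 1) : Fin D →₀ ℕ) t = 0)
      ↔ (∀ t, j' < t → q.lam t = 0) := by
    constructor <;> intro hh t ht <;> have := hh t ht <;>
      rw [Finsupp.tsub_apply, Finsupp.single_apply,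
        if_neg (ne_of_lt (lt_trans hgt ht))] at * <;> omega
  have hpoint : q.lam + Finsupp.single j' 1 - Finsupp.single j 1
      = q.lam - Finsupp.single j 1 + Finsupp.single j' 1 := by
    ext a
    simp only [Finsupp.tsub_apply, Finsupp.add_apply, Finsupp.single_apply]
    by_cases h1 : j = a <;> by_cases h2 : j' = a <;> simp_all <;> omega
  have happ : ((q.lam + Finsupp.single j' 1 : Fin D →₀ ℕ)) j = q.lam j := by
    rw [Finsupp.add_apply, Finsupp.single_apply, if_neg (ne_of_gt hgt), add_zero]
  simp only [divTop, Lmul, lamset_lam, happ]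
  by_cases hc1 : ∀ t, j' < t → q.lam t = 0 <;> by_cases hc2 : q.lam j = 0
  · rw [if_pos hc1, if_pos hc2, if_pos hc2]
  · rw [if_pos hc1, if_neg hc2, if_neg hc2, if_pos (hcond.mpr hc1), hpoint]
  · rw [if_neg hc1, if_pos hc2]
  · rw [if_neg hc1, if_neg hc2, if_neg (fun hh => hc1 (hcond.mp hh))]

lemma divTop_restr_le {j j' : Fin D} (hle : j' ≤ j) (g : GMIdx D m → ℂ) :
    divTop j' (restr j g) = divTop j' g := by
  funext q
  simp only [divTop, restr, lamset_lam]
  by_cases hc : ∀ t, j' < t → q.lam t = 0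
  · rw [if_pos hc, if_pos hc, if_pos]
    intro t ht
    rw [Finsupp.add_apply, Finsupp.single_apply, if_neg (ne_of_lt (lt_of_le_of_lt hle ht)),
      hc t (lt_of_le_of_lt hle ht)]
    omega
  · rw [if_neg hc, if_neg hc]

lemma divTop_restr_gt {j j' : Fin D} (hgt : j < j') (g : GMIdx D m → ℂ) :
    divTop j' (restr j g) = 0 := by
  funext q
  simp only [divTop, restr, lamset_lam, Pi.zero_apply]
  by_cases hc : ∀ t, j' < t → q.lam t = 0
  · rw [if_pos hc, if_neg]
    intro hh
    have := hh j' hgt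
    rw [Finsupp.add_apply, Finsupp.single_eq_same] at this
    omega
  · rw [if_neg hc]

lemma eps_restr (j : Fin D) (g : GMIdx D m → ℂ) (q : GMIdx D m) :
    eps F ς (restr j g) q = g { q with lam := 0 }
      + ∑ j' : Fin D, (if j' ≤ j then Aop F ς j' (eps F ς (divTop j' g)) q else 0) := by
  rw [eps_eq]
  congr 1
  · simp only [restr, lamset_lam]
    rw [if_pos]
    intro t _
    rfl
  · refine Finset.sum_congr rfl fun j' _ => ?_
    by_cases hle : j' ≤ j
    · rw [if_pos hle, divTop_restr_le hle]
    · rw [if_neg hle, divTop_restr_gt (not_le.mp hle), eps_zero_fun, Aop_zero]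
      rfl

lemma eps_Dtw (F : SmoothFan D m) (ς : (Fin D → ℤ) →+ (Fin m → ℤ)) (j : Fin D) :
    ∀ (n : ℕ) (p : GMIdx D m), mu p = n → p.lam = 0 → ∀ g : GMIdx D m → ℂ,
      eps F ς (Dtw F ς j g) p = 0 := by
  intro n
  induction n using Nat.strong_induction_on with
  | _ n ih =>
    intro p hp hlam g
    have hsub : eps F ς (Dtw F ς j g) p
        = eps F ς (Aop F ς j g) p - eps F ς (Lmul j g) p := by
      rw [Dtw_eq, eps_sub']
    rw [hsub, eps_Aop F ς j (mu p) p rfl]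
    suffices hL : eps F ς (Lmul j g) p = Aop F ς j (eps F ς g) p by rw [hL, sub_self]
    rw [eps_eq]
    have h0 : Lmul j g { p with lam := 0 } = 0 := by
      simp [Lmul]
    have hterm : ∀ j' ∈ (Finset.univ : Finset (Fin D)),
        Aop F ς j' (eps F ς (divTop j' (Lmul j g))) p
          = (if j' = j then Aop F ς j (eps F ς (restr j g)) p else 0)
            + (if j < j' then Aop F ς j (Aop F ς j' (eps F ς (divTop j' g))) p else 0) := by
      intro j' _
      rcases lt_trichotomy j' j with hlt | heq | hgt
      · rw [divTop_Lmul_lt hlt, eps_zero_fun, Aop_zero, if_neg (ne_of_lt hlt),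
          if_neg (not_lt.mpr hlt.le)]
        simp
      · subst heq
        rw [divTop_Lmul_eq, if_pos rfl, if_neg (lt_irrefl _), add_zero]
      · rw [divTop_Lmul_gt hgt, if_neg (ne_of_gt hgt), if_pos hgt, zero_add]
        have hinner : Aop F ς j' (eps F ς (Lmul j (divTop j' g))) p
            = Aop F ς j' (Aop F ς j (eps F ς (divTop j' g))) p := by
          apply Aop_congr
          intro q hq hqlam
          have hqlam0 : q.lam = 0 := by rw [hqlam, hlam]
          have hDtw := ih (mu q) (hp ▸ hq) q rfl hqlam0 (divTop j' g)
          rw [show Lmul j (divTop j' g)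
              = Aop F ς j (divTop j' g) - Dtw F ς j (divTop j' g) by
            rw [Dtw_eq, sub_sub_cancel]]
          rw [eps_sub', hDtw, sub_zero, eps_Aop F ς j (mu q) q rfl]
        rw [hinner, ← Aop_comm]
    rw [Finset.sum_congr rfl hterm, Finset.sum_add_distrib, Finset.sum_ite_eq',
      if_pos (Finset.mem_univ j), h0, zero_add]
    -- remaining: S1 + S2 = Aop j (eps g) p
    have hW : eps F ς (restr j g) = (fun q => g { q with lam := 0 })
        + ∑ j' : Fin D, (fun q => if j' ≤ j then Aop F ς j' (eps F ς (divTop j' g)) q else 0) := by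
      funext q
      rw [eps_restr]
      simp [Finset.sum_apply]
    have hcombine : ((fun q => g { q with lam := 0 })
        + ∑ j' : Fin D, (fun q => if j' ≤ j then Aop F ς j' (eps F ς (divTop j' g)) q else 0))
        + ∑ j' : Fin D, (fun q => if j < j' then Aop F ς j' (eps F ς (divTop j' g)) q else 0)
        = eps F ς g := by
      funext q
      rw [eq_comm, eps_eq F ς g q]
      simp only [Pi.add_apply, Finset.sum_apply]
      rw [add_assoc, ← Finset.sum_add_distrib]
      congr 1
      refine Finset.sum_congr rfl fun j' _ => ?_
      by_cases hle : j' ≤ j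
      · rw [if_pos hle, if_neg (not_lt.mpr hle), add_zero]
      · rw [if_neg hle, if_pos (not_le.mp hle), zero_add]
    have hAopsum : Aop F ς j (∑ j' : Fin D,
        (fun q => if j < j' then Aop F ς j' (eps F ς (divTop j' g)) q else 0)) p
        = ∑ j' : Fin D, (if j < j' then Aop F ς j (Aop F ς j' (eps F ς (divTop j' g))) p
            else 0) := by
      rw [Aop_sum]
      rw [Finset.sum_apply]
      refine Finset.sum_congr rfl fun j' _ => ?_
      by_cases hj : j < j'
      · rw [if_pos hj]
        congr 1
        funext q
        rw [if_pos hj]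
      · rw [if_neg hj]
        rw [show (fun q => if j < j' then Aop F ς j' (eps F ς (divTop j' g)) q else 0)
            = (0 : GMIdx D m → ℂ) by funext q; rw [if_neg hj]; rfl, Aop_zero]
        rfl
    calc Aop F ς j (eps F ς (restr j g)) p
          + ∑ j' : Fin D, (if j < j' then Aop F ς j (Aop F ς j' (eps F ς (divTop j' g))) p
              else 0)
        = Aop F ς j (eps F ς (restr j g)) p + Aop F ς j (∑ j' : Fin D,
            (fun q => if j < j' then Aop F ς j' (eps F ς (divTop j' g)) q else 0)) p := by
          rw [hAopsum]
      _ = Aop F ς j (eps F ς (restr j g) + ∑ j' : Fin D,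
            (fun q => if j < j' then Aop F ς j' (eps F ς (divTop j' g)) q else 0)) p := by
          rw [Aop_add]; rfl
      _ = Aop F ς j (eps F ς g) p := by rw [hW, hcombine]

end GMAux
namespace GMAux
open GMIdx

variable {D m : ℕ}

/-- recursive construction of the reducing potential. -/
noncomputable def solveG (F : SmoothFan D m) (ς : (Fin D → ℤ) →+ (Fin m → ℤ))
    (h : GMIdx D m → ℂ) (q : GMIdx D m) (j : Fin D) : ℂ :=
  if ∀ t, j < t → q.lam t = 0 then
    (∑ j' : Fin D,
      ((if hz : q.z = 0 then 0 else (q.x j' : ℂ) *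
          solveG F ς h (zdec { q with lam := q.lam + Finsupp.single j 1 }) j')
       + ∑ k ∈ q.y.support.attach,
          (if F.InSupport k.1 then (k.1 j' : ℂ) *
              solveG F ς h (ydec F ς { q with lam := q.lam + Finsupp.single j 1 } k.1) j'
            else 0)))
    - h { q with lam := q.lam + Finsupp.single j 1 }
  else 0
termination_by mu q
decreasing_by
  · have : mu (zdec ({ q with lam := q.lam + Finsupp.single j 1 })) < mu q := by
      have h2 : mu ({ q with lam := q.lam + Finsupp.single j 1 } : GMIdx D m) = mu q := rfl
      rw [← h2]
      exact mu_zdec_lt _ hz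
    exact this
  · have : mu (ydec F ς ({ q with lam := q.lam + Finsupp.single j 1 }) k.1) < mu q := by
      have h2 : mu ({ q with lam := q.lam + Finsupp.single j 1 } : GMIdx D m) = mu q := rfl
      rw [← h2]
      exact mu_ydec_lt _ k.1 k.2
    exact this

variable {F : SmoothFan D m} {ς : (Fin D → ℤ) →+ (Fin m → ℤ)}

lemma solveG_eq (h : GMIdx D m → ℂ) (q : GMIdx D m) (j : Fin D)
    (hc : ∀ t, j < t → q.lam t = 0) :
    solveG F ς h q j
      = (∑ j' : Fin D, Aop F ς j' (fun r => solveG F ς h r j')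
          { q with lam := q.lam + Finsupp.single j 1 })
        - h { q with lam := q.lam + Finsupp.single j 1 } := by
  rw [solveG, if_pos hc]
  congr 1
  refine Finset.sum_congr rfl fun j' _ => ?_
  rw [Aop_apply]
  congr 1
  exact Finset.sum_attach q.y.support (fun k => if F.InSupport k then (k j' : ℂ) *
      solveG F ς h (ydec F ς ({ q with lam := q.lam + Finsupp.single j 1 }) k) j' else 0)

lemma solveG_spec (h : GMIdx D m → ℂ) (p : GMIdx D m) (hp : p.lam ≠ 0) :
    (∑ j : Fin D, Dtw F ς j (fun r => solveG F ς h r j)) p = h p := by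
  classical
  have hne : p.lam.support.Nonempty := Finsupp.support_nonempty_iff.mpr hp
  set j₀ := p.lam.support.max' hne with hj₀
  have hj₀mem : j₀ ∈ p.lam.support := p.lam.support.max'_mem hne
  have hj₀ne : p.lam j₀ ≠ 0 := Finsupp.mem_support_iff.mp hj₀mem
  have hLterm : ∀ j : Fin D, Lmul j (fun r => solveG F ς h r j) p
      = if j = j₀ then (∑ j' : Fin D, Aop F ς j' (fun r => solveG F ς h r j') p) - h p
        else 0 := by
    intro j
    by_cases hz : p.lam j = 0
    · have hjne : j ≠ j₀ := fun e => hj₀ne (e ▸ hz)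
      rw [if_neg hjne]
      simp [Lmul, hz]
    · by_cases hj : j = j₀
      · rw [if_pos hj]
        show (if p.lam j = 0 then 0 else
          solveG F ς h { p with lam := p.lam - Finsupp.single j 1 } j) = _
        rw [if_neg hz]
        have hc : ∀ t, j < t → (({ p with lam := p.lam - Finsupp.single j 1 } : GMIdx D m)).lam t = 0 := by
          intro t ht
          rw [lamset_lam, Finsupp.tsub_apply, Finsupp.single_apply, if_neg (ne_of_lt ht)]
          have ht' : j₀ < t := hj ▸ ht
          have : t ∉ p.lam.support := fun hmem => absurd (p.lam.support.le_max' t hmem)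
            (not_le.mpr ht')
          rw [Finsupp.notMem_support_iff.mp this]
          omega
        rw [solveG_eq h _ j hc]
        have hl : (p.lam - Finsupp.single j 1) + Finsupp.single j 1 = p.lam :=
          tsub_add_cancel_of_le (Finsupp.single_le_iff.mpr (by omega))
        show (∑ j' : Fin D, Aop F ς j' (fun r => solveG F ς h r j')
            (⟨p.q, p.y, p.z, (p.lam - Finsupp.single j 1) + Finsupp.single j 1, p.x⟩ : GMIdx D m))
          - h (⟨p.q, p.y, p.z, (p.lam - Finsupp.single j 1) + Finsupp.single j 1, p.x⟩ : GMIdx D m)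
          = ∑ j' : Fin D, Aop F ς j' (fun r => solveG F ς h r j') p - h p
        rw [hl]
      · rw [if_neg hj]
        show (if p.lam j = 0 then 0 else
          solveG F ς h { p with lam := p.lam - Finsupp.single j 1 } j) = _
        rw [if_neg hz, solveG, if_neg]
        intro hcc
        have hjlt : j < j₀ := by
          rcases lt_or_eq_of_le (p.lam.support.le_max' j (Finsupp.mem_support_iff.mpr hz))
            with hlt | heq
          · exact hlt
          · exact absurd heq hj
        have := hcc j₀ hjlt
        rw [lamset_lam, Finsupp.tsub_apply, Finsupp.single_apply,
          if_neg (ne_of_lt hjlt)] at this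
        omega
  rw [Finset.sum_apply]
  have hsplit : ∀ j ∈ (Finset.univ : Finset (Fin D)),
      Dtw F ς j (fun r => solveG F ς h r j) p
        = Aop F ς j (fun r => solveG F ς h r j) p
          - (if j = j₀ then (∑ j' : Fin D, Aop F ς j' (fun r => solveG F ς h r j') p) - h p
             else 0) := by
    intro j _
    rw [Dtw_eq, Pi.sub_apply, hLterm j]
  rw [Finset.sum_congr rfl hsplit, Finset.sum_sub_distrib, Finset.sum_ite_eq',
    if_pos (Finset.mem_univ j₀)]
  ring

end GMAux
namespace GMAux
open GMIdx

variable {D m : ℕ} {F : SmoothFan D m} {ς : (Fin D → ℤ) →+ (Fin m → ℤ)}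

lemma Lmul_zero (j : Fin D) : Lmul j (0 : GMIdx D m → ℂ) = 0 := by
  funext p
  simp only [Lmul, Pi.zero_apply]
  split <;> rfl

lemma Lmul_neg (j : Fin D) (u : GMIdx D m → ℂ) : Lmul j (-u) = -Lmul j u := by
  funext p
  simp only [Lmul, Pi.neg_apply]
  split <;> simp

lemma Lmul_sub (j : Fin D) (u v : GMIdx D m → ℂ) : Lmul j (u - v) = Lmul j u - Lmul j v := by
  funext p
  simp only [Lmul, Pi.sub_apply]
  split <;> simp

lemma Dtw_zero (j : Fin D) : Dtw F ς j (0 : GMIdx D m → ℂ) = 0 := by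
  rw [Dtw_eq, Aop_zero, Lmul_zero, sub_zero]

lemma Dtw_neg (j : Fin D) (u : GMIdx D m → ℂ) : Dtw F ς j (-u) = -Dtw F ς j u := by
  rw [Dtw_eq, Dtw_eq, Aop_neg, Lmul_neg]
  abel

lemma Dtw_sub (j : Fin D) (u v : GMIdx D m → ℂ) :
    Dtw F ς j (u - v) = Dtw F ς j u - Dtw F ς j v := by
  rw [Dtw_eq, Dtw_eq, Dtw_eq, Aop_sub, Lmul_sub]
  abel

lemma ImD_sub {a b : GMIdx D m → ℂ} (ha : a ∈ ImD F ς) (hb : b ∈ ImD F ς) :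
    a - b ∈ ImD F ς := by
  obtain ⟨g1, hg1⟩ := ha
  obtain ⟨g2, hg2⟩ := hb
  refine ⟨fun j => g1 j - g2 j, ?_⟩
  rw [hg1, hg2, ← Finset.sum_sub_distrib]
  refine Finset.sum_congr rfl fun j _ => ?_
  rw [Dtw_sub]

/-- a `λ`-free element of the image of the twisted differential vanishes. -/
lemma lamfree_ImD_eq_zero {f : GMIdx D m → ℂ} (hmem : f ∈ ImD F ς)
    (hfree : ∀ p : GMIdx D m, p.lam ≠ 0 → f p = 0) : f = 0 := by
  obtain ⟨g, hg⟩ := hmem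
  funext p
  by_cases hlam : p.lam = 0
  · have h1 : eps F ς f p = f p := eps_lamfree f hfree p hlam
    have h2 : eps F ς f p = 0 := by
      rw [hg, eps_sum]
      exact Finset.sum_eq_zero fun j _ => eps_Dtw F ς j (mu p) p rfl hlam (g j)
    rw [← h1, h2]
    rfl
  · rw [hfree p hlam]
    rfl

/-! ### components of the relation (Statement part 1) -/

lemma Zcomp (i : Fin D) (l : Fin D → ℤ) :
    Zmul (Xlog i (wB F ς l))
      = (l i : ℂ) • delta ⟨F.beta ς l, 0, 1, 0, l⟩ := by
  funext p
  cases p with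
  | mk q y z lam x =>
    simp only [Zmul, Xlog, wB, delta, Pi.smul_apply, smul_eq_mul]
    by_cases h : (⟨q, y, z, lam, x⟩ : GMIdx D m) = ⟨F.beta ς l, 0, 1, 0, l⟩
    · rw [GMIdx.mk.injEq] at h
      obtain ⟨h1, h2, h3, h4, h5⟩ := h
      subst h1; subst h2; subst h3; subst h4; subst h5
      norm_num
    · rw [if_neg h, mul_zero]
      by_cases hz : z = 0
      · rw [if_pos hz]
      · rw [if_neg hz, if_neg, mul_zero]
        intro hcc
        rw [GMIdx.mk.injEq] at hcc h
        obtain ⟨h1, h2, h3, h4, h5⟩ := hcc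
        exact h ⟨h1, h2, by omega, h4, h5⟩

lemma Lcomp (i : Fin D) (l : Fin D → ℤ) :
    Lmul i (wB F ς l) = delta ⟨F.beta ς l, 0, 0, Finsupp.single i 1, l⟩ := by
  funext p
  cases p with
  | mk q y z lam x =>
    simp only [Lmul, wB, delta]
    by_cases hli : lam i = 0
    · rw [if_pos hli, eq_comm, if_neg]
      intro hcc
      rw [GMIdx.mk.injEq] at hcc
      rw [hcc.2.2.2.1, Finsupp.single_eq_same] at hli
      omega
    · rw [if_neg hli]
      refine if_congr ?_ rfl rfl
      rw [GMIdx.mk.injEq, GMIdx.mk.injEq]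
      constructor
      · rintro ⟨h1, h2, h3, h4, h5⟩
        exact ⟨h1, h2, h3, (finsupp_sub_single_eq_zero lam i hli).mp h4, h5⟩
      · rintro ⟨h1, h2, h3, h4, h5⟩
        refine ⟨h1, h2, h3, ?_, h5⟩
        rw [h4]
        exact tsub_self _

lemma Fcomp (i : Fin D) (l : Fin D → ℤ) :
    FmulX F ς i (wB F ς l)
      = fun p => ∑ k ∈ p.y.support,
          if F.InSupport k ∧
              p = ⟨F.beta ς k + F.beta ς l, Finsupp.single k 1, 0, 0, k + l⟩ then
            (k i : ℂ)
          else 0 := by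
  funext p
  cases p with
  | mk q y z lam x =>
    show ∑ k ∈ y.support, _ = ∑ k ∈ y.support, _
    refine Finset.sum_congr rfl fun k hk => ?_
    have hyk : y k ≠ 0 := Finsupp.mem_support_iff.mp hk
    by_cases hs : F.InSupport k
    · rw [if_pos hs]
      have hiff : ((⟨q - F.beta ς k, y - Finsupp.single k 1, z, lam, x - k⟩ : GMIdx D m)
            = ⟨F.beta ς l, 0, 0, 0, l⟩)
          ↔ ((⟨q, y, z, lam, x⟩ : GMIdx D m)
            = ⟨F.beta ς k + F.beta ς l, Finsupp.single k 1, 0, 0, k + l⟩) := by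
        rw [GMIdx.mk.injEq, GMIdx.mk.injEq]
        constructor
        · rintro ⟨h1, h2, h3, h4, h5⟩
          refine ⟨?_, (finsupp_sub_single_eq_zero y k hyk).mp h2, h3, h4, ?_⟩
          · rw [sub_eq_iff_eq_add.mp h1, add_comm]
          · rw [sub_eq_iff_eq_add.mp h5, add_comm]
        · rintro ⟨h1, h2, h3, h4, h5⟩
          refine ⟨?_, ?_, h3, h4, ?_⟩
          · rw [h1, add_sub_cancel_left]
          · rw [h2]; exact tsub_self _
          · rw [h5, add_sub_cancel_left]
      show (k i : ℂ) * (if _ = _ then (1:ℂ) else 0) = _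
      rw [mul_ite, mul_one, mul_zero, if_congr hiff rfl rfl,
        if_congr (and_iff_right hs).symm rfl rfl]
    · rw [if_neg hs, if_neg (fun hh => hs hh.1)]

lemma part1 (i : Fin D) (l : Fin D → ℤ) :
    Dtw F ς i (wB F ς l) =
      (l i : ℂ) • delta ⟨F.beta ς l, 0, 1, 0, l⟩
      + (fun p => ∑ k ∈ p.y.support,
          if F.InSupport k ∧
              p = ⟨F.beta ς k + F.beta ς l, Finsupp.single k 1, 0, 0, k + l⟩ then
            (k i : ℂ)
          else 0)
      - delta ⟨F.beta ς l, 0, 0, Finsupp.single i 1, l⟩ := by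
  show Zmul (Xlog i (wB F ς l)) + FmulX F ς i (wB F ς l) - Lmul i (wB F ς l) = _
  rw [Zcomp, Fcomp, Lcomp]

end GMAux
open GMIdx GMAux in
open scoped Classical in
/-- in the Gauss–Manin system of the universal equivariant toric
Landau–Ginzburg potential `F_λ(x;y) = Σ_k y_k Q^{β(k)} x^k − λ·log x`, the relation
`(zd + dF_λ∧) w^{Ψ(l)}ω_i = (z l_i w^{Ψ(l)} + Σ_k k_i y_k w^{Ψ(k)+Ψ(l)} − λ_i w^{Ψ(l)})ω`
holds; consequently `GM(F_λ) ≅ ℂ[z]{M}[[y]]·ω` (every class has a unique λ-free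
representative modulo the image of `zd + dF_λ∧`), with `λ_i` acting by
`λ_i·w^{Ψ(l)}ω = (z l_i w^{Ψ(l)} + Σ_k k_i y_k w^{Ψ(k)+Ψ(l)})ω`. -/
theorem gauss_manin_lambda_relation {D m : ℕ} (F : SmoothFan D m)
    (I₀ : Finset (Fin m)) (hI₀ : I₀ ∈ F.cones) (hcard : I₀.card = D)
    (ς : (Fin D → ℤ) →+ (Fin m → ℤ))
    (hsec : ∀ v : Fin D → ℤ, F.toN (ς v) = v)
    (hς : ∀ i ∈ I₀, ς (F.b i) = Pi.single i 1) :
    (∀ (i : Fin D) (l : Fin D → ℤ), F.InSupport l →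
      Dtw F ς i (wB F ς l) =
        (l i : ℂ) • delta ⟨F.beta ς l, 0, 1, 0, l⟩
        + (fun p => ∑ k ∈ p.y.support,
            if F.InSupport k ∧
                p = ⟨F.beta ς k + F.beta ς l, Finsupp.single k 1, 0, 0, k + l⟩ then
              (k i : ℂ)
            else 0)
        - delta ⟨F.beta ς l, 0, 0, Finsupp.single i 1, l⟩) ∧
    (∀ (i : Fin D) (l : Fin D → ℤ), F.InSupport l →
      Lmul i (wB F ς l)
        - ((l i : ℂ) • delta ⟨F.beta ς l, 0, 1, 0, l⟩
          + (fun p => ∑ k ∈ p.y.support,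
              if F.InSupport k ∧
                  p = ⟨F.beta ς k + F.beta ς l, Finsupp.single k 1, 0, 0, k + l⟩ then
                (k i : ℂ)
              else 0)) ∈ ImD F ς) ∧
    (∀ h : GMIdx D m → ℂ, ∃! h₀ : GMIdx D m → ℂ,
      (∀ p : GMIdx D m, p.lam ≠ 0 → h₀ p = 0) ∧ h - h₀ ∈ ImD F ς) := by
  refine ⟨fun i l _ => part1 i l, fun i l _ => ?_, fun h => ?_⟩
  · -- part 2
    refine ⟨fun j => if j = i then -(wB F ς l) else 0, ?_⟩
    have hterm : ∀ j ∈ (Finset.univ : Finset (Fin D)),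
        Dtw F ς j (if j = i then -(wB F ς l) else 0)
          = if j = i then Dtw F ς i (-(wB F ς l)) else 0 := by
      intro j _
      by_cases hj : j = i
      · subst hj; rw [if_pos rfl, if_pos rfl]
      · rw [if_neg hj, if_neg hj, Dtw_zero]
    rw [Finset.sum_congr rfl hterm, Finset.sum_ite_eq', if_pos (Finset.mem_univ i),
      Dtw_neg, part1, Lcomp]
    abel
  · -- part 3
    set g : Fin D → GMIdx D m → ℂ := fun j => fun r => solveG F ς h r j with hgdef
    set S : GMIdx D m → ℂ := ∑ j : Fin D, Dtw F ς j (g j) with hS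
    have hSp : ∀ p : GMIdx D m, p.lam ≠ 0 → S p = h p := by
      intro p hp
      rw [hS]
      exact solveG_spec h p hp
    refine ⟨h - S, ⟨?_, ?_⟩, ?_⟩
    · intro p hp
      rw [Pi.sub_apply, hSp p hp, sub_self]
    · rw [sub_sub_cancel]
      exact ⟨g, rfl⟩
    · rintro y ⟨hyfree, hymem⟩
      have hmem2 : h - (h - S) ∈ ImD F ς := by rw [sub_sub_cancel]; exact ⟨g, rfl⟩
      have hdiff : y - (h - S) = (h - (h - S)) - (h - y) := by abel
      have hmem3 : y - (h - S) ∈ ImD F ς := hdiff ▸ ImD_sub hmem2 hymem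
      have hfree2 : ∀ p : GMIdx D m, p.lam ≠ 0 → (y - (h - S)) p = 0 := by
        intro p hp
        simp only [Pi.sub_apply]
        rw [hyfree p hp, hSp p hp]
        ring
      exact sub_eq_zero.mp (lamfree_ImD_eq_zero hmem3 hfree2)
end

section
/- The Gauss–Manin connection ∇_{∂/∂y_k} on GM(F_λ), characterized by the Leibniz rule, ∇_{∂/∂y_k} w^{Ψ(l)}ω = z^{-1} w^{Ψ(k)+Ψ(l)} ω, and flatness, is well-defined: the operator z∇_{∂/∂y_k} preserves the image of (zd + dF_λ∧). Explicitly, z∇_{∂/∂y_k}[(zd + dF_λ∧) w^{Ψ(l)} ω_i] = Q^{d(k,l)} (zd + dF_λ∧) w^{Ψ(k+l)} ω_i. -/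
open Finset
open scoped Classical

namespace GMIdx

/-- The formal partial derivative `∂/∂y_k`. -/
noncomputable def Ypartial {D m : ℕ} (k : Fin D → ℤ) (g : GMIdx D m → ℂ) :
    GMIdx D m → ℂ :=
  fun p => ((p.y k + 1 : ℕ) : ℂ) * g {p with y := p.y + Finsupp.single k 1}

/-- `z∇_{∂/∂y_k} = z∂/∂y_k + w^{Ψ(k)}·`, the (rescaled) Gauss–Manin connection. -/
noncomputable def ZNabla {D m : ℕ} (F : SmoothFan D m)
    (ς : (Fin D → ℤ) →+ (Fin m → ℤ)) (k : Fin D → ℤ) (g : GMIdx D m → ℂ) :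
    GMIdx D m → ℂ :=
  Zmul (Ypartial k g) + Wmul F ς k g

end GMIdx
namespace GMIdx

variable {D m : ℕ}

section Aux
variable (F : SmoothFan D m) (ς : (Fin D → ℤ) →+ (Fin m → ℤ))

lemma Zmul_add (f g : GMIdx D m → ℂ) : Zmul (f + g) = Zmul f + Zmul g := by
  funext p; simp only [Zmul, Pi.add_apply]; split <;> simp

lemma Zmul_sub (f g : GMIdx D m → ℂ) : Zmul (f - g) = Zmul f - Zmul g := by
  funext p; simp only [Zmul, Pi.sub_apply]; split <;> simp

lemma Zmul_smul (c : ℂ) (f : GMIdx D m → ℂ) : Zmul (c • f) = c • Zmul f := by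
  funext p; simp only [Zmul, Pi.smul_apply, smul_eq_mul]; split <;> simp

lemma Lmul_add (i : Fin D) (f g : GMIdx D m → ℂ) :
    Lmul i (f + g) = Lmul i f + Lmul i g := by
  funext p; simp only [Lmul, Pi.add_apply]; split <;> simp

lemma Lmul_sub (i : Fin D) (f g : GMIdx D m → ℂ) :
    Lmul i (f - g) = Lmul i f - Lmul i g := by
  funext p; simp only [Lmul, Pi.sub_apply]; split <;> simp

lemma Qmul_add (d : Fin m → ℤ) (f g : GMIdx D m → ℂ) :
    Qmul d (f + g) = Qmul d f + Qmul d g := rfl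

lemma Qmul_sub (d : Fin m → ℤ) (f g : GMIdx D m → ℂ) :
    Qmul d (f - g) = Qmul d f - Qmul d g := rfl

lemma Wmul_add (k : Fin D → ℤ) (f g : GMIdx D m → ℂ) :
    Wmul F ς k (f + g) = Wmul F ς k f + Wmul F ς k g := rfl

lemma Wmul_sub (k : Fin D → ℤ) (f g : GMIdx D m → ℂ) :
    Wmul F ς k (f - g) = Wmul F ς k f - Wmul F ς k g := rfl

lemma Xlog_add (i : Fin D) (f g : GMIdx D m → ℂ) :
    Xlog i (f + g) = Xlog i f + Xlog i g := by
  funext p; simp only [Xlog, Pi.add_apply]; ring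

lemma Xlog_sub (i : Fin D) (f g : GMIdx D m → ℂ) :
    Xlog i (f - g) = Xlog i f - Xlog i g := by
  funext p; simp only [Xlog, Pi.sub_apply]; ring

lemma Ypartial_add (k : Fin D → ℤ) (f g : GMIdx D m → ℂ) :
    Ypartial k (f + g) = Ypartial k f + Ypartial k g := by
  funext p; simp only [Ypartial, Pi.add_apply]; ring

lemma Ypartial_sub (k : Fin D → ℤ) (f g : GMIdx D m → ℂ) :
    Ypartial k (f - g) = Ypartial k f - Ypartial k g := by
  funext p; simp only [Ypartial, Pi.sub_apply]; ring

lemma FmulX_add (i : Fin D) (f g : GMIdx D m → ℂ) :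
    FmulX F ς i (f + g) = FmulX F ς i f + FmulX F ς i g := by
  funext p; simp only [FmulX, Pi.add_apply]
  rw [← Finset.sum_add_distrib]
  refine Finset.sum_congr rfl fun k' _ => ?_
  split <;> ring

lemma FmulX_sub (i : Fin D) (f g : GMIdx D m → ℂ) :
    FmulX F ς i (f - g) = FmulX F ς i f - FmulX F ς i g := by
  funext p; simp only [FmulX, Pi.sub_apply]
  rw [← Finset.sum_sub_distrib]
  refine Finset.sum_congr rfl fun k' _ => ?_
  split <;> ring

lemma Dtw_add (i : Fin D) (f g : GMIdx D m → ℂ) :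
    Dtw F ς i (f + g) = Dtw F ς i f + Dtw F ς i g := by
  unfold Dtw
  rw [Xlog_add, Zmul_add, FmulX_add, Lmul_add]
  funext p; simp only [Pi.add_apply, Pi.sub_apply]; ring

lemma ZNabla_add (k : Fin D → ℤ) (f g : GMIdx D m → ℂ) :
    ZNabla F ς k (f + g) = ZNabla F ς k f + ZNabla F ς k g := by
  unfold ZNabla
  rw [Ypartial_add, Zmul_add, Wmul_add]
  funext p; simp only [Pi.add_apply]; ring

lemma ZNabla_zero (k : Fin D → ℤ) : ZNabla F ς k (0 : GMIdx D m → ℂ) = 0 := by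
  funext p
  simp [ZNabla, Zmul, Ypartial, Wmul]

-- easy commutators
lemma Ypartial_Zmul (k : Fin D → ℤ) (g : GMIdx D m → ℂ) :
    Ypartial k (Zmul g) = Zmul (Ypartial k g) := by
  funext p
  by_cases h : p.z = 0 <;> simp [Ypartial, Zmul, h]

lemma Ypartial_Lmul (k : Fin D → ℤ) (i : Fin D) (g : GMIdx D m → ℂ) :
    Ypartial k (Lmul i g) = Lmul i (Ypartial k g) := by
  funext p
  by_cases h : p.lam i = 0 <;> simp [Ypartial, Lmul, h]

lemma Ypartial_Xlog (k : Fin D → ℤ) (i : Fin D) (g : GMIdx D m → ℂ) :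
    Ypartial k (Xlog i g) = Xlog i (Ypartial k g) := by
  funext p
  simp [Ypartial, Xlog]; ring

lemma Wmul_Zmul (k : Fin D → ℤ) (g : GMIdx D m → ℂ) :
    Wmul F ς k (Zmul g) = Zmul (Wmul F ς k g) := by
  funext p
  by_cases h : p.z = 0 <;> simp [Wmul, Zmul, h]

lemma Wmul_Lmul (k : Fin D → ℤ) (i : Fin D) (g : GMIdx D m → ℂ) :
    Wmul F ς k (Lmul i g) = Lmul i (Wmul F ς k g) := by
  funext p
  by_cases h : p.lam i = 0 <;> simp [Wmul, Lmul, h]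

lemma Wmul_FmulX (k : Fin D → ℤ) (i : Fin D) (g : GMIdx D m → ℂ) :
    Wmul F ς k (FmulX F ς i g) = FmulX F ς i (Wmul F ς k g) := by
  funext p
  simp only [Wmul, FmulX]
  refine Finset.sum_congr rfl fun k' _ => ?_
  split
  · rw [sub_right_comm p.q (F.beta ς k) (F.beta ς k'), sub_right_comm p.x k k']
  · rfl

lemma FmulX_Zmul (i : Fin D) (g : GMIdx D m → ℂ) :
    FmulX F ς i (Zmul g) = Zmul (FmulX F ς i g) := by
  funext p
  by_cases h : p.z = 0
  · simp [FmulX, Zmul, h]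
  · simp only [FmulX, Zmul, h, if_neg]
    refine Finset.sum_congr rfl fun k' _ => ?_
    split <;> simp [h]

lemma Lmul_Zmul (i : Fin D) (g : GMIdx D m → ℂ) :
    Lmul i (Zmul g) = Zmul (Lmul i g) := by
  funext p
  by_cases h1 : p.z = 0 <;> by_cases h2 : p.lam i = 0 <;> simp [Lmul, Zmul, h1, h2]

lemma Xlog_Zmul (i : Fin D) (g : GMIdx D m → ℂ) :
    Xlog i (Zmul g) = Zmul (Xlog i g) := by
  funext p
  by_cases h : p.z = 0 <;> simp [Xlog, Zmul, h]

-- Qmul commutators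
lemma Qmul_Zmul (d : Fin m → ℤ) (g : GMIdx D m → ℂ) :
    Qmul d (Zmul g) = Zmul (Qmul d g) := by
  funext p
  by_cases h : p.z = 0 <;> simp [Qmul, Zmul, h]

lemma Qmul_Lmul (d : Fin m → ℤ) (i : Fin D) (g : GMIdx D m → ℂ) :
    Qmul d (Lmul i g) = Lmul i (Qmul d g) := by
  funext p
  by_cases h : p.lam i = 0 <;> simp [Qmul, Lmul, h]

lemma Qmul_Xlog (d : Fin m → ℤ) (i : Fin D) (g : GMIdx D m → ℂ) :
    Qmul d (Xlog i g) = Xlog i (Qmul d g) := by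
  funext p; simp [Qmul, Xlog]

lemma Qmul_FmulX (d : Fin m → ℤ) (i : Fin D) (g : GMIdx D m → ℂ) :
    Qmul d (FmulX F ς i g) = FmulX F ς i (Qmul d g) := by
  funext p
  simp only [Qmul, FmulX]
  refine Finset.sum_congr rfl fun k' _ => ?_
  split
  · rw [sub_right_comm p.q d (F.beta ς k')]
  · rfl

lemma Qmul_Dtw (d : Fin m → ℤ) (i : Fin D) (g : GMIdx D m → ℂ) :
    Dtw F ς i (Qmul d g) = Qmul d (Dtw F ς i g) := by
  unfold Dtw
  rw [Qmul_sub, Qmul_add, Qmul_Zmul, Qmul_Xlog, Qmul_FmulX, Qmul_Lmul]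

end Aux

end GMIdx
namespace GMIdx

variable {D m : ℕ}

section Aux2
variable (F : SmoothFan D m) (ς : (Fin D → ℤ) →+ (Fin m → ℤ))

lemma Xlog_Wmul (i : Fin D) (k : Fin D → ℤ) (g : GMIdx D m → ℂ) :
    Xlog i (Wmul F ς k g) = Wmul F ς k (Xlog i g) + (k i : ℂ) • Wmul F ς k g := by
  funext p
  simp only [Xlog, Wmul, Pi.add_apply, Pi.smul_apply, smul_eq_mul, Pi.sub_apply]
  push_cast
  ring

lemma support_add_single (f : (Fin D → ℤ) →₀ ℕ) (k : Fin D → ℤ) :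
    (f + Finsupp.single k 1).support = insert k f.support := by
  ext j
  simp only [Finsupp.mem_support_iff, Finsupp.add_apply, Finsupp.single_apply,
    Finset.mem_insert]
  by_cases h : k = j
  · subst h; simp
  · simp [h, Ne.symm h]

lemma Ypartial_FmulX (i : Fin D) (k : Fin D → ℤ) (hk : F.InSupport k)
    (g : GMIdx D m → ℂ) :
    Ypartial k (FmulX F ς i g) =
      FmulX F ς i (Ypartial k g) + (k i : ℂ) • Wmul F ς k g := by
  funext p
  simp only [Ypartial, FmulX, Wmul, Pi.add_apply, Pi.smul_apply, smul_eq_mul]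
  rw [support_add_single, Finset.mul_sum]
  have hyy : p.y + Finsupp.single k 1 - Finsupp.single k 1 = p.y :=
    add_tsub_cancel_right _ _
  by_cases hky : k ∈ p.y.support
  · have hk1 : (1 : ℕ) ≤ p.y k := Nat.one_le_iff_ne_zero.2 (Finsupp.mem_support_iff.1 hky)
    rw [Finset.insert_eq_self.2 hky]
    rw [← Finset.sum_erase_add _ _ hky, ← Finset.sum_erase_add _ _ hky, add_assoc]
    congr 1
    · refine Finset.sum_congr rfl fun k' hk' => ?_
      have hne : k' ≠ k := (Finset.mem_erase.1 hk').1
      have hy1 : p.y + Finsupp.single k 1 - Finsupp.single k' 1 =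
          p.y - Finsupp.single k' 1 + Finsupp.single k 1 := by
        ext j
        simp only [Finsupp.add_apply, Finsupp.tsub_apply, Finsupp.single_apply]
        by_cases h1 : k = j
        · have h2 : ¬ k' = j := fun h => hne (h.trans h1.symm)
          simp [h1, h2]
        · by_cases h2 : k' = j <;> simp [h1, h2]
      have hc : ((p.y - Finsupp.single k' 1 : (Fin D → ℤ) →₀ ℕ)) k = p.y k := by
        simp [Finsupp.tsub_apply, Finsupp.single_apply, hne]
      rw [hy1, hc]
      split <;> ring
    · have hy2 : p.y - Finsupp.single k 1 + Finsupp.single k 1 = p.y := by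
        ext j
        simp only [Finsupp.add_apply, Finsupp.tsub_apply, Finsupp.single_apply]
        by_cases h1 : k = j
        · subst h1; simp; omega
        · simp [h1]
      have hc2 : ((p.y - Finsupp.single k 1 : (Fin D → ℤ) →₀ ℕ)) k = p.y k - 1 := by
        simp [Finsupp.tsub_apply]
      rw [hyy, hy2, hc2, if_pos hk, if_pos hk, Nat.sub_add_cancel hk1]
      push_cast
      ring
  · have hy0 : p.y k = 0 := Finsupp.notMem_support_iff.1 hky
    rw [Finset.sum_insert hky, hy0, hyy, if_pos hk]
    norm_num
    rw [add_comm]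
    congr 1
    refine Finset.sum_congr rfl fun k' hk' => ?_
    have hne : k' ≠ k := fun h => hky (h ▸ hk')
    have hy1 : p.y + Finsupp.single k 1 - Finsupp.single k' 1 =
        p.y - Finsupp.single k' 1 + Finsupp.single k 1 := by
      ext j
      simp only [Finsupp.add_apply, Finsupp.tsub_apply, Finsupp.single_apply]
      by_cases h1 : k = j
      · have h2 : ¬ k' = j := fun h => hne (h.trans h1.symm)
        simp [h1, h2]
      · by_cases h2 : k' = j <;> simp [h1, h2]
    have hc : ((p.y - Finsupp.single k' 1 : (Fin D → ℤ) →₀ ℕ)) k = p.y k := by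
      simp [Finsupp.tsub_apply, Finsupp.single_apply, hne]
    rw [hy1]
    simp [Finsupp.single_apply, hne, hy0]

end Aux2

end GMIdx
namespace GMIdx

variable {D m : ℕ}

section Aux3
variable (F : SmoothFan D m) (ς : (Fin D → ℤ) →+ (Fin m → ℤ))

lemma ZNabla_Dtw (i : Fin D) (k : Fin D → ℤ) (hk : F.InSupport k)
    (g : GMIdx D m → ℂ) :
    ZNabla F ς k (Dtw F ς i g) = Dtw F ς i (ZNabla F ς k g) := by
  unfold ZNabla Dtw
  simp only [Ypartial_sub, Ypartial_add, Wmul_sub, Wmul_add, Ypartial_Zmul,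
    Ypartial_Xlog, Ypartial_FmulX F ς i k hk, Ypartial_Lmul, Wmul_Zmul, Wmul_FmulX,
    Wmul_Lmul, Xlog_add, Xlog_sub, Xlog_Wmul, Xlog_Zmul, FmulX_add, FmulX_sub,
    FmulX_Zmul, Lmul_add, Lmul_sub, Lmul_Zmul, Zmul_add, Zmul_sub, Zmul_smul]
  abel

lemma beta_add (k l : Fin D → ℤ) :
    F.beta ς k + F.beta ς l = F.beta ς (k + l) + F.dEff k l := by
  funext j
  simp only [SmoothFan.beta, SmoothFan.dEff, Pi.add_apply, Pi.sub_apply, map_add]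
  ring

lemma Zmul_zero : Zmul (0 : GMIdx D m → ℂ) = 0 := by
  funext p; simp [Zmul]

lemma Ypartial_wB (k l : Fin D → ℤ) : Ypartial k (wB F ς l) = 0 := by
  funext p
  have hy : p.y + Finsupp.single k 1 ≠ 0 := by
    intro h
    have := DFunLike.congr_fun h k
    simp [Finsupp.single_apply] at this
  simp [Ypartial, wB, delta, GMIdx.mk.injEq, hy]

lemma Wmul_wB (k l : Fin D → ℤ) :
    Wmul F ς k (wB F ς l) = Qmul (F.dEff k l) (wB F ς (k + l)) := by
  funext p
  have hq : F.beta ς l + F.beta ς k = F.beta ς (k + l) + F.dEff k l := by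
    rw [add_comm, beta_add]
  have hx : l + k = k + l := add_comm _ _
  simp only [Wmul, Qmul, wB, delta, GMIdx.mk.injEq, sub_eq_iff_eq_add]
  rw [hq, hx]

lemma ZNabla_wB (k l : Fin D → ℤ) :
    ZNabla F ς k (wB F ς l) = Qmul (F.dEff k l) (wB F ς (k + l)) := by
  unfold ZNabla
  rw [Ypartial_wB, Zmul_zero, Wmul_wB, zero_add]

lemma ZNabla_sum {ι : Type*} (s : Finset ι) (k : Fin D → ℤ) (h : ι → GMIdx D m → ℂ) :
    ZNabla F ς k (∑ j ∈ s, h j) = ∑ j ∈ s, ZNabla F ς k (h j) := by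
  classical
  induction s using Finset.induction_on with
  | empty => simpa using ZNabla_zero F ς k
  | insert j s hj ih => rw [Finset.sum_insert hj, Finset.sum_insert hj, ZNabla_add, ih]

end Aux3

end GMIdx
open GMIdx in
/-- the Gauss–Manin connection (characterized by the Leibniz rule,
`∇_{∂/∂y_k} w^{Ψ(l)}ω = z⁻¹ w^{Ψ(k)+Ψ(l)}ω` and flatness) is well defined: the operator
`z∇_{∂/∂y_k}` preserves the image of `zd + dF_λ∧`; explicitly,
`z∇_{∂/∂y_k}[(zd + dF_λ∧) w^{Ψ(l)}ω_i] = Q^{d(k,l)} (zd + dF_λ∧) w^{Ψ(k+l)}ω_i`. -/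
theorem gauss_manin_connection_well_defined {D m : ℕ} (F : SmoothFan D m)
    (I₀ : Finset (Fin m)) (hI₀ : I₀ ∈ F.cones) (hcard : I₀.card = D)
    (ς : (Fin D → ℤ) →+ (Fin m → ℤ))
    (hsec : ∀ v : Fin D → ℤ, F.toN (ς v) = v)
    (hς : ∀ i ∈ I₀, ς (F.b i) = Pi.single i 1) :
    (∀ (i : Fin D) (k l : Fin D → ℤ), F.InSupport k → F.InSupport l →
      ZNabla F ς k (Dtw F ς i (wB F ς l)) =
        Qmul (F.dEff k l) (Dtw F ς i (wB F ς (k + l)))) ∧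
    (∀ k : Fin D → ℤ, F.InSupport k → ∀ h ∈ ImD F ς, ZNabla F ς k h ∈ ImD F ς) := by
  constructor
  · intro i k l hk hl
    rw [ZNabla_Dtw F ς i k hk, ZNabla_wB, Qmul_Dtw]
  · rintro k hk h ⟨g, rfl⟩
    refine ⟨fun j => ZNabla F ς k (g j), ?_⟩
    rw [ZNabla_sum]
    exact Finset.sum_congr rfl fun j _ => ZNabla_Dtw F ς j k hk (g j)
end
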